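/- arXiv:1211.3950 — 7 statements merged into one kernel-verified Lean document; each statement's English description precedes it below -/
import Mathlib

section
/- Let h* ∈ Λ₀ be a feasible flow such that for every O-D pair w ∈ W and every path p ∈ P_w, c_p(t) = v_w holds for almost every t ∈ [t₀,t_f] with h*_p(t) > 0 (flow departs only at times of minimal effective delay). Then h* solves the variational inequality: for every h ∈ Λ₀, ∑_{p∈P} ∫_{t₀}^{t_f} c_p(t)·(h_p(t) − h*_p(t)) dt ≥ 0. -/
open MeasureTheory

/-- If a feasible flow `hstar ∈ Λ₀` departs (a.e.) only at times of minimal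
effective delay (`c_p t = v_w` whenever `hstar_p t > 0`), then it solves the variational
inequality `∑_p ∫ c_p (h_p - hstar_p) ≥ 0` for all feasible `h`. -/
theorem due_implies_variational_inequality
    (t₀ tf : ℝ) (htt : t₀ < tf)
    (W : Type) [Fintype W] [Nonempty W]
    (P : Type) [Fintype P]
    (π : P → W) [DecidableEq W] (hπ : ∀ w : W, ∃ p : P, π p = w)
    (c : P → ℝ → ℝ)
    (hc_meas : ∀ p, Measurable (c p))
    (hc_bdd : ∀ p, ∃ M : ℝ, ∀ t ∈ Set.Icc t₀ tf, |c p t| ≤ M)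
    (Q : W → ℝ) (hQ : ∀ w, 0 < Q w)
    (v : W → ℝ)
    (hv : ∀ w, v w =
      essInf (fun t => ⨅ p : {p : P // π p = w}, c p.1 t)
        (volume.restrict (Set.Icc t₀ tf)))
    (Λ₀ : (P → ℝ → ℝ) → Prop)
    (hΛ₀ : ∀ h : P → ℝ → ℝ, Λ₀ h ↔
      ((∀ p, MemLp (h p) 2 (volume.restrict (Set.Icc t₀ tf))) ∧
       (∀ p, ∀ᵐ t ∂(volume.restrict (Set.Icc t₀ tf)), 0 ≤ h p t) ∧
       (∀ w, ∑ p ∈ Finset.univ.filter (fun p => π p = w),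
          ∫ t in t₀..tf, h p t = Q w)))
    (hstar : P → ℝ → ℝ) (hstar_feas : Λ₀ hstar)
    (hmin : ∀ w : W, ∀ p : P, π p = w →
      ∀ᵐ t ∂(volume.restrict (Set.Icc t₀ tf)),
        0 < hstar p t → c p t = v w) :
    ∀ h : P → ℝ → ℝ, Λ₀ h →
      0 ≤ ∑ p : P, ∫ t in t₀..tf, c p t * (h p t - hstar p t) := by
  intro h hfeas
  set μ := volume.restrict (Set.Icc t₀ tf) with hμ
  haveI : IsFiniteMeasure μ := by
    constructor
    rw [hμ, Measure.restrict_apply_univ]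
    exact measure_Icc_lt_top
  obtain ⟨h_mem, h_nn, h_sum⟩ := (hΛ₀ h).1 hfeas
  obtain ⟨hs_mem, hs_nn, hs_sum⟩ := (hΛ₀ hstar).1 hstar_feas
  -- choose bounds for c
  choose M hM using hc_bdd
  have haein : ∀ᵐ t ∂μ, t ∈ Set.Icc t₀ tf := ae_restrict_mem measurableSet_Icc
  -- c p ≥ v (π p)  a.e.
  have hvle : ∀ p : P, ∀ᵐ t ∂μ, v (π p) ≤ c p t := by
    intro p
    set w := π p
    set g : ℝ → ℝ := fun t => ⨅ q : {q : P // π q = w}, c q.1 t with hg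
    haveI : Nonempty {q : P // π q = w} := ⟨⟨p, rfl⟩⟩
    set B : ℝ := ∑ q : P, (1 + |M q|) with hB
    have hbound : ∀ᵐ t ∂μ, -B ≤ g t := by
      filter_upwards [haein] with t ht
      have : ∀ q : {q : P // π q = w}, -B ≤ c q.1 t := by
        intro q
        have h1 : |c q.1 t| ≤ M q.1 := hM q.1 t ht
        have h2 : M q.1 ≤ B := by
          calc M q.1 ≤ 1 + |M q.1| := by
                have := abs_nonneg (M q.1); have := le_abs_self (M q.1); linarith
            _ ≤ B := Finset.single_le_sum (f := fun q => 1 + |M q|) (fun i _ => by positivity) (Finset.mem_univ q.1)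
        have := neg_abs_le (c q.1 t)
        have h3 : -M q.1 ≤ c q.1 t := by
          have := abs_le.1 h1; linarith [this.1]
        linarith
      exact le_ciInf this
    have hbdd : Filter.IsBoundedUnder (· ≥ ·) (ae μ) g := ⟨-B, hbound⟩
    have hess : ∀ᵐ t ∂μ, essInf g μ ≤ g t := ae_essInf_le hbdd
    filter_upwards [hess] with t ht
    have hle : g t ≤ c p t := by
      refine ciInf_le ?_ (⟨p, rfl⟩ : {q : P // π q = w})
      exact (Set.finite_range _).bddBelow
    calc v w = essInf g μ := hv w
      _ ≤ g t := ht
      _ ≤ c p t := hle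
  -- integrability
  have hint : ∀ (g : P → ℝ → ℝ), (∀ p, MemLp (g p) 2 μ) → ∀ p : P,
      Integrable (g p) μ ∧ Integrable (fun t => c p t * g p t) μ := by
    intro g hg p
    have hig : Integrable (g p) μ := (hg p).integrable (by norm_num)
    refine ⟨hig, ?_⟩
    refine Integrable.bdd_mul (c := M p) hig (hc_meas p).aestronglyMeasurable ?_
    filter_upwards [haein] with t ht
    simpa [Real.norm_eq_abs] using hM p t ht
  have hinth := fun p => hint h h_mem p
  have hints := fun p => hint hstar hs_mem p
  -- convert interval integral to μ-integral
  have hconv : ∀ g : ℝ → ℝ, (∫ t in t₀..tf, g t) = ∫ t, g t ∂μ := by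
    intro g
    rw [intervalIntegral.integral_of_le htt.le, hμ, integral_Icc_eq_integral_Ioc]
  -- lower bound for ∫ c p * h p
  have hlow : ∀ p : P, v (π p) * ∫ t, h p t ∂μ ≤ ∫ t, c p t * h p t ∂μ := by
    intro p
    rw [← integral_const_mul]
    refine integral_mono_ae ((hinth p).1.const_mul _) (hinth p).2 ?_
    filter_upwards [hvle p, h_nn p] with t h1 h2
    exact mul_le_mul_of_nonneg_right h1 h2
  -- equality for hstar
  have heqs : ∀ p : P, (∫ t, c p t * hstar p t ∂μ) = v (π p) * ∫ t, hstar p t ∂μ := by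
    intro p
    rw [← integral_const_mul]
    refine integral_congr_ae ?_
    filter_upwards [hmin (π p) p rfl, hs_nn p] with t h1 h2
    rcases lt_or_eq_of_le h2 with hpos | hzero
    · rw [h1 hpos]
    · rw [← hzero, mul_zero, mul_zero]
  -- fiberwise sums give ∑ v(π p) ∫ g p = ∑ w, v w * Q w
  have hfiber : ∀ g : P → ℝ → ℝ,
      (∀ w, ∑ p ∈ Finset.univ.filter (fun p => π p = w), ∫ t in t₀..tf, g p t = Q w) →
      ∑ p : P, v (π p) * ∫ t, g p t ∂μ = ∑ w : W, v w * Q w := by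
    intro g hg
    rw [← Finset.sum_fiberwise_of_maps_to (fun p _ => Finset.mem_univ (π p))
      (fun p => v (π p) * ∫ t, g p t ∂μ)]
    refine Finset.sum_congr rfl fun w _ => ?_
    rw [← hg w, Finset.mul_sum]
    refine Finset.sum_congr rfl fun p hp => ?_
    rw [Finset.mem_filter] at hp
    rw [hp.2, hconv]
  -- put it together
  have hsplit : ∀ p : P, (∫ t in t₀..tf, c p t * (h p t - hstar p t)) =
      (∫ t, c p t * h p t ∂μ) - ∫ t, c p t * hstar p t ∂μ := by
    intro p
    rw [hconv]
    rw [← integral_sub (hinth p).2 (hints p).2]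
    refine integral_congr_ae (Filter.Eventually.of_forall fun t => ?_)
    ring
  calc (0:ℝ) = ∑ w : W, v w * Q w - ∑ w : W, v w * Q w := by ring
    _ = ∑ p : P, v (π p) * (∫ t, h p t ∂μ) - ∑ p : P, v (π p) * ∫ t, hstar p t ∂μ := by
        rw [hfiber h h_sum, hfiber hstar hs_sum]
    _ ≤ ∑ p : P, (∫ t, c p t * h p t ∂μ) - ∑ p : P, ∫ t, c p t * hstar p t ∂μ := by
        have h1 : ∑ p : P, v (π p) * (∫ t, h p t ∂μ) ≤ ∑ p : P, ∫ t, c p t * h p t ∂μ :=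
          Finset.sum_le_sum fun p _ => hlow p
        have h2 : ∑ p : P, (∫ t, c p t * hstar p t ∂μ) = ∑ p : P, v (π p) * ∫ t, hstar p t ∂μ :=
          Finset.sum_congr rfl fun p _ => heqs p
        linarith
    _ = ∑ p : P, ∫ t in t₀..tf, c p t * (h p t - hstar p t) := by
        rw [← Finset.sum_sub_distrib]
        exact (Finset.sum_congr rfl fun p _ => (hsplit p).symm)
end

section
/- The infimum of the total effective delay over all feasible flows equals the demand-weighted sum of the minimal effective delays: inf_{h∈Λ₀} ∑_{p∈P} ∫_{t₀}^{t_f} c_p(t)·h_p(t) dt = ∑_{w∈W} v_w · Q_w. -/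
open MeasureTheory

/-- The infimum of the total effective delay over all feasible flows equals
the demand-weighted sum of the minimal effective delays:
`inf_{h ∈ Λ₀} ∑_p ∫ c_p h_p = ∑_w v_w Q_w`. -/
theorem inf_total_delay_eq_weighted_min_delay
    (t₀ tf : ℝ) (htt : t₀ < tf)
    (W : Type) [Fintype W] [Nonempty W] [DecidableEq W]
    (P : Type) [Fintype P]
    (π : P → W) (hπ : ∀ w : W, ∃ p : P, π p = w)
    (c : P → ℝ → ℝ)
    (hc_meas : ∀ p, Measurable (c p))
    (hc_bdd : ∀ p, ∃ M : ℝ, ∀ t ∈ Set.Icc t₀ tf, |c p t| ≤ M)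
    (Q : W → ℝ) (hQ : ∀ w, 0 < Q w)
    (v : W → ℝ)
    (hv : ∀ w, v w =
      essInf (fun t => ⨅ p : {p : P // π p = w}, c p.1 t)
        (volume.restrict (Set.Icc t₀ tf)))
    (Λ₀ : (P → ℝ → ℝ) → Prop)
    (hΛ₀ : ∀ h : P → ℝ → ℝ, Λ₀ h ↔
      ((∀ p, MemLp (h p) 2 (volume.restrict (Set.Icc t₀ tf))) ∧
       (∀ p, ∀ᵐ t ∂(volume.restrict (Set.Icc t₀ tf)), 0 ≤ h p t) ∧
       (∀ w, ∑ p ∈ Finset.univ.filter (fun p => π p = w),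
          ∫ t in t₀..tf, h p t = Q w))) :
    sInf {z : ℝ | ∃ h : P → ℝ → ℝ, Λ₀ h ∧
        z = ∑ p : P, ∫ t in t₀..tf, c p t * h p t}
      = ∑ w : W, v w * Q w := by
  classical
  set μI := volume.restrict (Set.Icc t₀ tf) with hμIdef
  haveI : IsFiniteMeasure μI := by
    constructor
    rw [hμIdef, Measure.restrict_apply_univ]
    exact measure_Icc_lt_top
  have hμIne : μI ≠ 0 := by
    intro h0
    have h1 : μI Set.univ = 0 := by rw [h0]; rfl
    rw [hμIdef, Measure.restrict_apply_univ, Real.volume_Icc] at h1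
    rw [ENNReal.ofReal_eq_zero] at h1
    linarith
  haveI : (MeasureTheory.ae μI).NeBot := ae_neBot.2 hμIne
  haveI hPne : Nonempty P := ⟨(hπ Classical.ofNonempty).choose⟩
  -- global bound
  obtain ⟨M, hM⟩ : ∃ M : ℝ, ∀ p, ∀ t ∈ Set.Icc t₀ tf, |c p t| ≤ M := by
    choose B hB using hc_bdd
    refine ⟨∑ p, |B p|, fun p t ht => ?_⟩
    refine (hB p t ht).trans ((le_abs_self _).trans ?_)
    exact Finset.single_le_sum (fun q _ => abs_nonneg (B q)) (Finset.mem_univ p)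
  -- fiber infimum function
  haveI hfibne : ∀ w : W, Nonempty {p : P // π p = w} :=
    fun w => ⟨⟨(hπ w).choose, (hπ w).choose_spec⟩⟩
  set f : W → ℝ → ℝ := fun w t => ⨅ p : {p : P // π p = w}, c p.1 t with hfdef
  have hvf : ∀ w, essInf (f w) μI = v w := fun w => (hv w).symm
  have hfle : ∀ w t (p : P), π p = w → f w t ≤ c p t := by
    intro w t p hp
    have hbd : BddBelow (Set.range fun p : {p : P // π p = w} => c p.1 t) :=
      (Set.finite_range _).bddBelow
    exact ciInf_le hbd ⟨p, hp⟩
  have hf_ub : ∀ w, ∀ᵐ t ∂μI, f w t ≤ M := by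
    intro w
    filter_upwards [ae_restrict_mem measurableSet_Icc] with t ht
    obtain ⟨p, hp⟩ := hπ w
    exact (hfle w t p hp).trans ((le_abs_self _).trans (hM p t ht))
  have hf_lb : ∀ w, ∀ᵐ t ∂μI, -M ≤ f w t := by
    intro w
    filter_upwards [ae_restrict_mem measurableSet_Icc] with t ht
    exact le_ciInf fun p => neg_le_of_abs_le (hM p.1 t ht)
  have hbdd_ge : ∀ w, Filter.IsBoundedUnder (· ≥ ·) (MeasureTheory.ae μI) (f w) :=
    fun w => ⟨-M, hf_lb w⟩
  have hcob : ∀ w, Filter.IsCoboundedUnder (· ≥ ·) (MeasureTheory.ae μI) (f w) :=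
    fun w => Filter.isCoboundedUnder_ge_of_eventually_le _ (hf_ub w)
  have hv_ae : ∀ w, ∀ δ : ℝ, 0 < δ → ∀ᵐ t ∂μI, v w - δ < f w t := by
    intro w δ hδ
    refine ae_lt_of_lt_essInf ?_ (hbdd_ge w)
    rw [hvf w]
    exact sub_lt_self _ hδ
  -- conversion of interval integrals
  have hconv : ∀ g : ℝ → ℝ, (∫ t in t₀..tf, g t) = ∫ t, g t ∂μI := by
    intro g
    rw [intervalIntegral.integral_of_le htt.le, hμIdef, ← integral_Icc_eq_integral_Ioc]
  -- the slack weights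
  have hcardpos : (0:ℝ) < (Fintype.card W : ℝ) := by
    exact_mod_cast Fintype.card_pos
  -- LOWER BOUND with slack
  have hlb : ∀ ε : ℝ, 0 < ε → ∀ h : P → ℝ → ℝ, Λ₀ h →
      (∑ w, v w * Q w) - ε ≤ ∑ p, ∫ t in t₀..tf, c p t * h p t := by
    intro ε hε h hh
    obtain ⟨hmem, hpos, hdem⟩ := (hΛ₀ h).1 hh
    set δ : W → ℝ := fun w => ε / ((Fintype.card W : ℝ) * Q w) with hδdef
    have hδpos : ∀ w, 0 < δ w := fun w => div_pos hε (mul_pos hcardpos (hQ w))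
    have hδQ : ∀ w, δ w * Q w = ε / (Fintype.card W : ℝ) := by
      intro w
      rw [hδdef]
      rw [div_mul_eq_mul_div, mul_comm ((Fintype.card W : ℝ)) (Q w), ← div_div,
        mul_div_cancel_right₀ _ (hQ w).ne']
    have hInth : ∀ p, Integrable (h p) μI := fun p => (hmem p).integrable one_le_two
    have hIntch : ∀ p, Integrable (fun t => c p t * h p t) μI := by
      intro p
      refine (hInth p).bdd_mul (c := M) (hc_meas p).aestronglyMeasurable ?_
      filter_upwards [ae_restrict_mem measurableSet_Icc] with t ht
      simpa [Real.norm_eq_abs] using hM p t ht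
    have key : ∀ p, (v (π p) - δ (π p)) * ∫ t, h p t ∂μI ≤ ∫ t, c p t * h p t ∂μI := by
      intro p
      rw [← integral_const_mul]
      refine integral_mono_ae ((hInth p).const_mul _) (hIntch p) ?_
      filter_upwards [hpos p, hv_ae (π p) (δ (π p)) (hδpos _)] with t h0 h1
      exact mul_le_mul_of_nonneg_right (h1.le.trans (hfle (π p) t p rfl)) h0
    have hsumδ : ∑ w, δ w * Q w = ε := by
      rw [Finset.sum_congr rfl fun w _ => hδQ w, Finset.sum_const, Finset.card_univ,
        nsmul_eq_mul, mul_div_cancel₀ _ (ne_of_gt hcardpos)]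
    calc (∑ w, v w * Q w) - ε = ∑ w, (v w - δ w) * Q w := by
          rw [Finset.sum_congr rfl fun w _ => sub_mul (v w) (δ w) (Q w),
            Finset.sum_sub_distrib, hsumδ]
      _ = ∑ w, ∑ p ∈ Finset.univ.filter (fun p => π p = w),
            ((v (π p) - δ (π p)) * ∫ t, h p t ∂μI) := by
          refine Finset.sum_congr rfl fun w _ => ?_
          rw [Finset.sum_congr rfl (fun p hp => by
            rw [(Finset.mem_filter.1 hp).2]), ← Finset.mul_sum]
          congr 1
          rw [← hdem w]
          exact Finset.sum_congr rfl fun p _ => hconv (h p)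
      _ = ∑ p, ((v (π p) - δ (π p)) * ∫ t, h p t ∂μI) := Finset.sum_fiberwise _ _ _
      _ ≤ ∑ p, ∫ t, c p t * h p t ∂μI := Finset.sum_le_sum fun p _ => key p
      _ = ∑ p, ∫ t in t₀..tf, c p t * h p t :=
          Finset.sum_congr rfl fun p _ => (hconv _).symm
  -- UPPER BOUND construction
  have hub : ∀ ε : ℝ, 0 < ε → ∃ h : P → ℝ → ℝ, Λ₀ h ∧
      (∑ p, ∫ t in t₀..tf, c p t * h p t) ≤ (∑ w, v w * Q w) + ε := by
    intro ε hε
    set δ : W → ℝ := fun w => ε / ((Fintype.card W : ℝ) * Q w) with hδdef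
    have hδpos : ∀ w, 0 < δ w := fun w => div_pos hε (mul_pos hcardpos (hQ w))
    have hδQ : ∀ w, δ w * Q w = ε / (Fintype.card W : ℝ) := by
      intro w
      rw [hδdef]
      rw [div_mul_eq_mul_div, mul_comm ((Fintype.card W : ℝ)) (Q w), ← div_div,
        mul_div_cancel_right₀ _ (hQ w).ne']
    have hsumδ : ∑ w, δ w * Q w = ε := by
      rw [Finset.sum_congr rfl fun w _ => hδQ w, Finset.sum_const, Finset.card_univ,
        nsmul_eq_mul, mul_div_cancel₀ _ (ne_of_gt hcardpos)]
    -- select a path realizing near-minimal cost on a positive-measure set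
    have hsel : ∀ w : W, ∃ p : P, π p = w ∧ μI {t | c p t < v w + δ w} ≠ 0 := by
      intro w
      by_contra hcon
      push_neg at hcon
      have hnull : μI {t | f w t < v w + δ w} = 0 := by
        refine measure_mono_null ?_
          (measure_iUnion_null
            (s := fun p : {p : P // π p = w} => {t | c p.1 t < v w + δ w})
            (fun p => hcon p.1 p.2))
        intro t ht
        obtain ⟨p, hp⟩ := exists_lt_of_ciInf_lt
          (show (⨅ p : {p : P // π p = w}, c p.1 t) < v w + δ w from ht)
        exact Set.mem_iUnion.2 ⟨p, hp⟩
      have hge : ∀ᵐ t ∂μI, v w + δ w ≤ f w t := by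
        rw [MeasureTheory.ae_iff]
        simpa [not_le] using hnull
      have hle2 : v w + δ w ≤ essInf (f w) μI := Filter.le_liminf_of_le (hcob w) hge
      rw [hvf w] at hle2
      linarith [hδpos w]
    choose sel hsel1 hsel2 using hsel
    set T : W → Set ℝ :=
      fun w => Set.Ioc t₀ tf ∩ {t | c (sel w) t < v w + δ w} with hTdef
    have hTmeas : ∀ w, MeasurableSet (T w) :=
      fun w => measurableSet_Ioc.inter (measurableSet_lt (hc_meas _) measurable_const)
    have hTfin : ∀ w, volume (T w) ≠ ⊤ :=
      fun w => ((measure_mono Set.inter_subset_left).trans_lt measure_Ioc_lt_top).ne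
    have hTpos : ∀ w, 0 < volume (T w) := by
      intro w
      rw [pos_iff_ne_zero]
      intro h0
      refine hsel2 w ?_
      have h1 : μI {t | c (sel w) t < v w + δ w} ≤ volume (T w) + volume ({t₀} : Set ℝ) := by
        rw [hμIdef, Measure.restrict_apply (measurableSet_lt (hc_meas _) measurable_const)]
        refine le_trans (measure_mono ?_) (measure_union_le _ _)
        rintro t ⟨hts, htI⟩
        rcases eq_or_lt_of_le htI.1 with heq | hlt
        · exact Or.inr (by simp [← heq])
        · exact Or.inl ⟨⟨hlt, htI.2⟩, hts⟩
      rw [h0, Real.volume_singleton, zero_add] at h1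
      exact le_antisymm h1 (zero_le)
    set m : W → ℝ := fun w => (volume (T w)).toReal with hmdef
    have hm : ∀ w, 0 < m w := fun w => ENNReal.toReal_pos (hTpos w).ne' (hTfin w)
    set h : P → ℝ → ℝ := fun p =>
      if p = sel (π p) then
        (fun t => (Q (π p) / m (π p)) * (T (π p)).indicator (fun _ => (1:ℝ)) t)
      else 0 with hhdef
    have hhsel : ∀ w, h (sel w) =
        fun t => (Q w / m w) * (T w).indicator (fun _ => (1:ℝ)) t := by
      intro w
      rw [hhdef]
      simp only [hsel1 w, eq_self_iff_true, if_true]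
    have hhother : ∀ p, p ≠ sel (π p) → h p = 0 := by
      intro p hp
      rw [hhdef]
      simp only [if_neg hp]
    have hμITfin : ∀ w, μI (T w) ≠ ⊤ :=
      fun w => ((Measure.restrict_apply_le _ _).trans_lt (hTfin w).lt_top).ne
    have hIoc_inter : ∀ w, Set.Ioc t₀ tf ∩ T w = T w := by
      intro w
      exact Set.inter_eq_self_of_subset_right Set.inter_subset_left
    have hint_ind : ∀ w, (∫ t in t₀..tf, (T w).indicator (fun _ => (1:ℝ)) t) = m w := by
      intro w
      rw [intervalIntegral.integral_of_le htt.le, setIntegral_indicator (hTmeas w),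
        hIoc_inter w, setIntegral_const, smul_eq_mul, mul_one]
      rfl
    have hfeas : Λ₀ h := by
      refine (hΛ₀ h).2 ⟨?_, ?_, ?_⟩
      · intro p
        by_cases hp : p = sel (π p)
        · rw [hhdef]
          simp only [if_pos hp]
          exact (memLp_indicator_const 2 (hTmeas (π p)) (1:ℝ)
            (Or.inr (hμITfin (π p)))).const_mul _
        · rw [hhother p hp]
          exact MemLp.zero
      · intro p
        refine Filter.Eventually.of_forall fun t => ?_
        by_cases hp : p = sel (π p)
        · rw [hhdef]
          simp only [if_pos hp]
          exact mul_nonneg (div_nonneg (hQ _).le (hm _).le)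
            (Set.indicator_nonneg (fun _ _ => zero_le_one) t)
        · rw [hhother p hp]
          rfl
      · intro w
        rw [Finset.sum_eq_single_of_mem (sel w)
          (Finset.mem_filter.2 ⟨Finset.mem_univ _, hsel1 w⟩)]
        · rw [hhsel w]
          rw [intervalIntegral.integral_const_mul]
          rw [hint_ind w]
          exact div_mul_cancel₀ _ (hm w).ne'
        · intro p hpmem hpne
          have : p ≠ sel (π p) := by
            rw [(Finset.mem_filter.1 hpmem).2]
            exact hpne
          rw [hhother p this]
          simp
    -- bound on the value
    have hval : ∀ w, (∫ t in t₀..tf, c (sel w) t * h (sel w) t) ≤ (v w + δ w) * Q w := by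
      intro w
      rw [hhsel w]
      have heq : (fun t => c (sel w) t * ((Q w / m w) * (T w).indicator (fun _ => (1:ℝ)) t))
          = fun t => (Q w / m w) * (T w).indicator (c (sel w)) t := by
        funext t
        by_cases ht : t ∈ T w
        · simp [Set.indicator_of_mem ht]
          ring
        · simp [Set.indicator_of_notMem ht]
      rw [heq, intervalIntegral.integral_const_mul, intervalIntegral.integral_of_le htt.le,
        setIntegral_indicator (hTmeas w), hIoc_inter w]
      have hci : IntegrableOn (c (sel w)) (T w) volume := by
        refine Integrable.mono' (g := fun _ => M)
          (integrableOn_const (hTfin w))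
          (hc_meas (sel w)).aestronglyMeasurable ?_
        filter_upwards [ae_restrict_mem (hTmeas w)] with t ht
        rw [Real.norm_eq_abs]
        exact hM (sel w) t (Set.Ioc_subset_Icc_self ht.1)
      have h2 : (∫ t in T w, c (sel w) t) ≤ (v w + δ w) * m w := by
        have := setIntegral_mono_on hci
          (integrableOn_const (hTfin w)) (hTmeas w)
          (fun t ht => (ht.2 : c (sel w) t < v w + δ w).le)
        rwa [setIntegral_const, smul_eq_mul, mul_comm] at this
      calc Q w / m w * ∫ t in T w, c (sel w) t
          ≤ Q w / m w * ((v w + δ w) * m w) :=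
            mul_le_mul_of_nonneg_left h2 (div_nonneg (hQ w).le (hm w).le)
        _ = (v w + δ w) * Q w := by
            rw [mul_comm (v w + δ w) (m w), ← mul_assoc, div_mul_cancel₀ _ (hm w).ne',
              mul_comm]
    refine ⟨h, hfeas, ?_⟩
    calc ∑ p, ∫ t in t₀..tf, c p t * h p t
        = ∑ w, ∑ p ∈ Finset.univ.filter (fun p => π p = w),
            ∫ t in t₀..tf, c p t * h p t := (Finset.sum_fiberwise _ _ _).symm
      _ = ∑ w, ∫ t in t₀..tf, c (sel w) t * h (sel w) t := by
          refine Finset.sum_congr rfl fun w _ => ?_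
          rw [Finset.sum_eq_single_of_mem (sel w)
            (Finset.mem_filter.2 ⟨Finset.mem_univ _, hsel1 w⟩)]
          intro p hpmem hpne
          have : p ≠ sel (π p) := by
            rw [(Finset.mem_filter.1 hpmem).2]
            exact hpne
          rw [hhother p this]
          simp
      _ ≤ ∑ w, (v w + δ w) * Q w := Finset.sum_le_sum fun w _ => hval w
      _ = (∑ w, v w * Q w) + ε := by
          rw [Finset.sum_congr rfl fun w _ => add_mul (v w) (δ w) (Q w),
            Finset.sum_add_distrib, hsumδ]
  -- Assemble
  set S := {z : ℝ | ∃ h : P → ℝ → ℝ, Λ₀ h ∧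
      z = ∑ p : P, ∫ t in t₀..tf, c p t * h p t} with hSdef
  have hlbS : ∀ z ∈ S, (∑ w, v w * Q w) ≤ z := by
    rintro z ⟨h, hh, rfl⟩
    refine le_of_forall_pos_le_add fun ε hε => ?_
    have := hlb ε hε h hh
    linarith
  have hSne : S.Nonempty := by
    obtain ⟨h, hh, -⟩ := hub 1 one_pos
    exact ⟨_, h, hh, rfl⟩
  have hbdd : BddBelow S := ⟨∑ w, v w * Q w, fun z hz => hlbS z hz⟩
  refine le_antisymm ?_ (le_csInf hSne hlbS)
  refine le_of_forall_pos_le_add fun ε hε => ?_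
  obtain ⟨h, hh, hle⟩ := hub ε hε
  exact (csInf_le hbdd ⟨h, hh, rfl⟩).trans hle
end

section
/- Suppose h* ∈ Λ₀ solves the variational inequality: for every h ∈ Λ₀, ∑_{p∈P} ∫_{t₀}^{t_f} c_p(t)·(h_p(t) − h*_p(t)) dt ≥ 0. Then ∑_{p∈P} ∫_{t₀}^{t_f} c_p(t)·h*_p(t) dt = ∑_{w∈W} v_w·Q_w, and for every w ∈ W and every p ∈ P_w, h*_p(t)·(c_p(t) − v_w) = 0 for almost every t ∈ [t₀,t_f]; that is, flow departs only at times at which the effective delay equals the minimal value v_w (dynamic user equilibrium condition). -/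
open MeasureTheory

/-- If `hstar ∈ Λ₀` solves the variational inequality, then its total
effective delay equals `∑_w v_w Q_w` and, for every OD pair `w` and path `p ∈ P_w`,
`hstar_p t * (c_p t - v_w) = 0` for a.e. `t` (the dynamic user equilibrium condition). -/
theorem variational_inequality_implies_due
    (t₀ tf : ℝ) (htt : t₀ < tf)
    (W : Type) [Fintype W] [Nonempty W] [DecidableEq W]
    (P : Type) [Fintype P]
    (π : P → W) (hπ : ∀ w : W, ∃ p : P, π p = w)
    (c : P → ℝ → ℝ)
    (hc_meas : ∀ p, Measurable (c p))
    (hc_bdd : ∀ p, ∃ M : ℝ, ∀ t ∈ Set.Icc t₀ tf, |c p t| ≤ M)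
    (Q : W → ℝ) (hQ : ∀ w, 0 < Q w)
    (v : W → ℝ)
    (hv : ∀ w, v w =
      essInf (fun t => ⨅ p : {p : P // π p = w}, c p.1 t)
        (volume.restrict (Set.Icc t₀ tf)))
    (Λ₀ : (P → ℝ → ℝ) → Prop)
    (hΛ₀ : ∀ h : P → ℝ → ℝ, Λ₀ h ↔
      ((∀ p, MemLp (h p) 2 (volume.restrict (Set.Icc t₀ tf))) ∧
       (∀ p, ∀ᵐ t ∂(volume.restrict (Set.Icc t₀ tf)), 0 ≤ h p t) ∧
       (∀ w, ∑ p ∈ Finset.univ.filter (fun p => π p = w),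
          ∫ t in t₀..tf, h p t = Q w)))
    (hstar : P → ℝ → ℝ) (hstar_feas : Λ₀ hstar)
    (hVI : ∀ h : P → ℝ → ℝ, Λ₀ h →
      0 ≤ ∑ p : P, ∫ t in t₀..tf, c p t * (h p t - hstar p t)) :
    (∑ p : P, ∫ t in t₀..tf, c p t * hstar p t) = (∑ w : W, v w * Q w) ∧
    (∀ w : W, ∀ p : P, π p = w →
      ∀ᵐ t ∂(volume.restrict (Set.Icc t₀ tf)),
        hstar p t * (c p t - v w) = 0) := by
  classical
  have hIcc : MeasurableSet (Set.Icc t₀ tf) := measurableSet_Icc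
  set μ : Measure ℝ := volume.restrict (Set.Icc t₀ tf) with hμdef
  have hμIoc : volume.restrict (Set.Ioc t₀ tf) = μ :=
    Measure.restrict_congr_set Ioc_ae_eq_Icc
  have hint : ∀ f : ℝ → ℝ, (∫ t in t₀..tf, f t) = ∫ t, f t ∂μ := fun f => by
    rw [intervalIntegral.integral_of_le htt.le, hμIoc]
  haveI hfin : IsFiniteMeasure μ := by
    constructor
    rw [hμdef, Measure.restrict_apply_univ, Real.volume_Icc]
    exact ENNReal.ofReal_lt_top
  have hμne : μ ≠ 0 := by
    intro h0
    have h1 : μ (Set.Icc t₀ tf) = 0 := by rw [h0]; rfl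
    rw [hμdef, Measure.restrict_apply_self, Real.volume_Icc] at h1
    rw [ENNReal.ofReal_eq_zero] at h1
    linarith
  haveI : Filter.NeBot (ae μ) := ae_neBot.2 hμne
  have hmem : ∀ᵐ t ∂μ, t ∈ Set.Icc t₀ tf := by
    rw [hμdef]; exact ae_restrict_mem hIcc
  obtain ⟨hL2, hpos, hsum⟩ := (hΛ₀ hstar).1 hstar_feas
  have hsumμ : ∀ w, ∑ p ∈ Finset.univ.filter (fun p => π p = w),
      ∫ t, hstar p t ∂μ = Q w := by
    intro w; rw [← hsum w]; exact Finset.sum_congr rfl fun p _ => (hint _).symm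
  -- the fiberwise infimum function
  set g : W → ℝ → ℝ := fun w t => ⨅ p : {p : P // π p = w}, c p.1 t with hgdef
  haveI hfib : ∀ w, Nonempty {p : P // π p = w} := fun w => (hπ w).elim fun p hp => ⟨⟨p, hp⟩⟩
  have hvg : ∀ w, v w = essInf (g w) μ := fun w => hv w
  have hg_meas : ∀ w, Measurable (g w) := fun w => Measurable.iInf fun p => hc_meas p.1
  haveI hPne : Nonempty P := (hπ (Classical.arbitrary W)).elim fun p _ => ⟨p⟩
  obtain ⟨M, hM⟩ : ∃ M : ℝ, ∀ p, ∀ t ∈ Set.Icc t₀ tf, |c p t| ≤ M := by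
    choose Mf hMf using hc_bdd
    refine ⟨(Finset.univ.image Mf).max' (by simp [Finset.univ_nonempty]), fun p t ht => ?_⟩
    exact (hMf p t ht).trans
      (Finset.le_max' _ _ (Finset.mem_image_of_mem _ (Finset.mem_univ _)))
  have hg_le_c : ∀ p t, g (π p) t ≤ c p t := fun p t =>
    ciInf_le (Set.Finite.bddBelow (Set.finite_range _)) (⟨p, rfl⟩ : {q : P // π q = π p})
  have hg_le : ∀ w t, t ∈ Set.Icc t₀ tf → g w t ≤ M := by
    intro w t ht
    obtain ⟨p₀, hp₀⟩ := hπ w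
    calc g w t ≤ c p₀ t := hp₀ ▸ hg_le_c p₀ t
      _ ≤ M := (abs_le.1 (hM p₀ t ht)).2
  have hbdd : ∀ w, Filter.IsBoundedUnder (· ≥ ·) (ae μ) (g w) := by
    intro w
    refine ⟨-M, Filter.eventually_map.2 ?_⟩
    filter_upwards [hmem] with t ht
    exact le_ciInf fun p => (abs_le.1 (hM p.1 t ht)).1
  have factA : ∀ w, ∀ᵐ t ∂μ, v w ≤ g w t := by
    intro w
    have h := ae_essInf_le (f := g w) (μ := μ) (hbdd w)
    rw [hvg w]; exact h
  have factA' : ∀ p, ∀ᵐ t ∂μ, v (π p) ≤ c p t := fun p =>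
    (factA (π p)).mono fun t ht => ht.trans (hg_le_c p t)
  have factB : ∀ w, ∀ ε : ℝ, 0 < ε → μ {t | g w t < v w + ε} ≠ 0 := by
    intro w ε hε h0
    have hmemS : (v w + ε) ∈ {a : ℝ | μ {x | g w x < a} = 0} := h0
    have hbddS : BddAbove {a : ℝ | μ {x | g w x < a} = 0} := by
      refine ⟨M + 1, fun a ha => ?_⟩
      have h1 : ∀ᵐ t ∂μ, a ≤ g w t := by
        rw [ae_iff]; simpa [not_le] using ha
      have h2 : ∀ᵐ t ∂μ, g w t ≤ M := by
        filter_upwards [hmem] with t ht using hg_le w t ht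
      obtain ⟨t, ht1, ht2⟩ := (h1.and h2).exists
      linarith
    have hle := le_csSup hbddS hmemS
    rw [← essInf_eq_sSup, ← hvg w] at hle
    linarith
  -- integrability
  have hstar_int : ∀ p, Integrable (hstar p) μ := fun p => (hL2 p).integrable one_le_two
  have hch_int : ∀ (p : P) (f : ℝ → ℝ), Integrable f μ →
      Integrable (fun t => c p t * f t) μ := by
    intro p f hf
    refine hf.bdd_mul (c := M) ((hc_meas p).aestronglyMeasurable) ?_
    filter_upwards [hmem] with t ht
    simpa [Real.norm_eq_abs] using hM p t ht
  have hvh_int : ∀ p, Integrable (fun t => v (π p) * hstar p t) μ := fun p =>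
    (hstar_int p).const_mul _
  have hcvh_int : ∀ p, Integrable (fun t => (c p t - v (π p)) * hstar p t) μ := by
    intro p
    have h := (hch_int p _ (hstar_int p)).sub (hvh_int p)
    convert h using 1; funext t; simp only [Pi.sub_apply]; ring
  have split : ∀ p, ∫ t, c p t * hstar p t ∂μ
      = (∫ t, (c p t - v (π p)) * hstar p t ∂μ) + v (π p) * ∫ t, hstar p t ∂μ := by
    intro p
    have heq : (fun t => c p t * hstar p t)
        = fun t => (c p t - v (π p)) * hstar p t + v (π p) * hstar p t := by
      funext t; ring
    rw [heq, integral_add (hcvh_int p) (hvh_int p), integral_const_mul]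
  have hae_nonneg : ∀ p, (0 : ℝ → ℝ) ≤ᵐ[μ] fun t => (c p t - v (π p)) * hstar p t := by
    intro p
    filter_upwards [factA' p, hpos p] with t h1 h2
    exact mul_nonneg (by linarith) h2
  have hIp_nonneg : ∀ p, 0 ≤ ∫ t, (c p t - v (π p)) * hstar p t ∂μ := fun p =>
    integral_nonneg_of_ae (hae_nonneg p)
  have hregroup : ∀ (F : P → ℝ), ∑ p : P, v (π p) * F p
      = ∑ w : W, v w * ∑ p ∈ Finset.univ.filter (fun p => π p = w), F p := by
    intro F
    rw [← Finset.sum_fiberwise Finset.univ π (fun p => v (π p) * F p)]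
    refine Finset.sum_congr rfl fun w _ => ?_
    rw [Finset.mul_sum]
    refine Finset.sum_congr rfl fun p hp => ?_
    rw [(Finset.mem_filter.1 hp).2]
  set T := ∑ p : P, ∫ t, c p t * hstar p t ∂μ with hT
  have hTint : (∑ p : P, ∫ t in t₀..tf, c p t * hstar p t) = T :=
    Finset.sum_congr rfl fun p _ => hint _
  have hTsplit : T = (∑ p : P, ∫ t, (c p t - v (π p)) * hstar p t ∂μ)
      + ∑ w : W, v w * Q w := by
    rw [hT]
    calc ∑ p : P, ∫ t, c p t * hstar p t ∂μ
        = ∑ p : P, ((∫ t, (c p t - v (π p)) * hstar p t ∂μ)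
            + v (π p) * ∫ t, hstar p t ∂μ) := Finset.sum_congr rfl fun p _ => split p
      _ = (∑ p : P, ∫ t, (c p t - v (π p)) * hstar p t ∂μ)
            + ∑ p : P, v (π p) * ∫ t, hstar p t ∂μ := Finset.sum_add_distrib
      _ = _ := by
          rw [hregroup (fun p => ∫ t, hstar p t ∂μ)]
          congr 1
          exact Finset.sum_congr rfl fun w _ => by rw [hsumμ w]
  have lower : ∑ w : W, v w * Q w ≤ T := by
    rw [hTsplit]
    exact le_add_of_nonneg_left (Finset.sum_nonneg fun p _ => hIp_nonneg p)
  -- upper bound via the variational inequality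
  have upper : ∀ ε : ℝ, 0 < ε → T ≤ (∑ w : W, v w * Q w) + ε * ∑ w : W, Q w := by
    intro ε hε
    set idx : P → ℕ := fun p => (Fintype.equivFin P p : ℕ) with hidx
    have hidx_inj : Function.Injective idx := fun p q h =>
      (Fintype.equivFin P).injective (Fin.val_injective h)
    set B : P → Set ℝ := fun p =>
      (Set.Ioc t₀ tf ∩ {t | c p t < v (π p) + ε}) ∩
        ⋂ (q : P) (_ : π q = π p ∧ idx q < idx p), {t | v (π q) + ε ≤ c q t} with hBdef
    have hBmeas : ∀ p, MeasurableSet (B p) := by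
      intro p
      refine (measurableSet_Ioc.inter (measurableSet_lt (hc_meas p) measurable_const)).inter ?_
      exact MeasurableSet.iInter fun q => MeasurableSet.iInter fun _ =>
        measurableSet_le measurable_const (hc_meas q)
    have hBsub : ∀ p, B p ⊆ Set.Ioc t₀ tf := fun p t ht => ht.1.1
    have hBdisj : ∀ p q, π p = π q → p ≠ q → Disjoint (B p) (B q) := by
      intro p q hpq hne
      rcases (hidx_inj.ne hne).lt_or_gt with h | h
      · rw [Set.disjoint_left]
        intro t htp htq
        have h1 : v (π p) + ε ≤ c p t :=
          Set.mem_iInter.1 (Set.mem_iInter.1 htq.2 p) ⟨hpq, h⟩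
        exact absurd htp.1.2 (not_lt.2 h1)
      · rw [Set.disjoint_left]
        intro t htp htq
        have h1 : v (π q) + ε ≤ c q t :=
          Set.mem_iInter.1 (Set.mem_iInter.1 htp.2 q) ⟨hpq.symm, h⟩
        exact absurd htq.1.2 (not_lt.2 h1)
    have hcover : ∀ w, (⋃ p ∈ Finset.univ.filter (fun p => π p = w), B p)
        = Set.Ioc t₀ tf ∩ {t | g w t < v w + ε} := by
      intro w
      apply Set.Subset.antisymm
      · intro t ht
        simp only [Set.mem_iUnion, Finset.mem_filter, Finset.mem_univ, true_and] at ht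
        obtain ⟨p, hpw, htB⟩ := ht
        refine ⟨htB.1.1, ?_⟩
        have h1 : g w t ≤ c p t := hpw ▸ hg_le_c p t
        have h2 : c p t < v w + ε := by rw [← hpw]; exact htB.1.2
        exact lt_of_le_of_lt h1 h2
      · rintro t ⟨htIoc, htg⟩
        have hsne : (Finset.univ.filter (fun p => π p = w ∧ c p t < v w + ε)).Nonempty := by
          obtain ⟨⟨p₀, hp₀⟩, hlt⟩ := exists_lt_of_ciInf_lt
            (show (⨅ p : {p : P // π p = w}, c p.1 t) < v w + ε from htg)
          exact ⟨p₀, Finset.mem_filter.2 ⟨Finset.mem_univ _, hp₀, hlt⟩⟩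
        obtain ⟨p, hp, hminp⟩ := Finset.exists_min_image _ idx hsne
        rw [Finset.mem_filter] at hp
        obtain ⟨-, hpw, hpc⟩ := hp
        simp only [Set.mem_iUnion, Finset.mem_filter, Finset.mem_univ, true_and]
        refine ⟨p, hpw, ⟨⟨htIoc, ?_⟩, ?_⟩⟩
        · rw [hpw]; exact hpc
        · refine Set.mem_iInter.2 fun q => Set.mem_iInter.2 fun hq => ?_
          by_contra hlt
          rw [Set.mem_setOf_eq, not_le] at hlt
          have hqw : π q = w := hq.1.trans hpw
          have hqmem : q ∈ Finset.univ.filter (fun p => π p = w ∧ c p t < v w + ε) :=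
            Finset.mem_filter.2 ⟨Finset.mem_univ _, hqw, by rw [← hqw]; exact hlt⟩
          exact absurd (hminp q hqmem) (not_le.2 hq.2)
    set m : W → ENNReal := fun w =>
      volume (⋃ p ∈ Finset.univ.filter (fun p => π p = w), B p) with hmdef
    have hBfin : ∀ p, volume (B p) ≠ ⊤ := fun p =>
      (lt_of_le_of_lt (measure_mono (hBsub p))
        (by rw [Real.volume_Ioc]; exact ENNReal.ofReal_lt_top)).ne
    have hmsum : ∀ w, ∑ p ∈ Finset.univ.filter (fun p => π p = w), volume (B p) = m w := by
      intro w
      refine (measure_biUnion_finset ?_ fun p _ => hBmeas p).symm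
      intro p hp q hq hne
      rw [Finset.mem_coe, Finset.mem_filter] at hp hq
      exact hBdisj p q (hp.2.trans hq.2.symm) hne
    have hm_fin : ∀ w, m w ≠ ⊤ := fun w =>
      (lt_of_le_of_lt (measure_mono (Set.iUnion₂_subset fun p _ => hBsub p))
        (by rw [Real.volume_Ioc]; exact ENNReal.ofReal_lt_top)).ne
    have hm_pos : ∀ w, m w ≠ 0 := by
      intro w h0
      apply factB w ε hε
      have hSm : MeasurableSet {t | g w t < v w + ε} :=
        measurableSet_lt (hg_meas w) measurable_const
      rw [hμdef, Measure.restrict_apply hSm]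
      have hIoc0 : volume (Set.Ioc t₀ tf ∩ {t | g w t < v w + ε}) = 0 := by
        rw [← hcover w]; exact h0
      refine measure_mono_null ?_ (measure_union_null hIoc0 (measure_singleton t₀))
      rintro t ⟨htg, ht1, ht2⟩
      rcases eq_or_lt_of_le ht1 with he | hlt
      · exact Or.inr (Set.mem_singleton_iff.2 he.symm)
      · exact Or.inl ⟨⟨hlt, ht2⟩, htg⟩
    have hmt_pos : ∀ w, 0 < (m w).toReal := fun w =>
      ENNReal.toReal_pos (hm_pos w) (hm_fin w)
    set hf : P → ℝ → ℝ := fun p =>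
      (B p).indicator (fun _ => Q (π p) / (m (π p)).toReal) with hfdef
    have hf_nonneg : ∀ p t, 0 ≤ hf p t := fun p t =>
      Set.indicator_nonneg (fun _ _ => div_nonneg (hQ _).le ENNReal.toReal_nonneg) t
    have hf_int : ∀ p, Integrable (hf p) μ := fun p =>
      (integrable_const _).indicator (hBmeas p)
    have hμB : ∀ p, μ (B p) = volume (B p) := by
      intro p
      rw [hμdef, Measure.restrict_apply (hBmeas p),
        Set.inter_eq_self_of_subset_left ((hBsub p).trans Set.Ioc_subset_Icc_self)]
    have hf_integral : ∀ p, ∫ t, hf p t ∂μ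
        = Q (π p) / (m (π p)).toReal * (volume (B p)).toReal := by
      intro p
      simp only [hfdef]
      rw [integral_indicator_const _ (hBmeas p), measureReal_def, hμB p, smul_eq_mul, mul_comm]
    have hf_fiber_sum : ∀ w,
        ∑ p ∈ Finset.univ.filter (fun p => π p = w), ∫ t, hf p t ∂μ = Q w := by
      intro w
      have hcong : ∀ p ∈ Finset.univ.filter (fun p => π p = w),
          ∫ t, hf p t ∂μ = Q w / (m w).toReal * (volume (B p)).toReal := by
        intro p hp
        rw [hf_integral p, (Finset.mem_filter.1 hp).2]
      rw [Finset.sum_congr rfl hcong, ← Finset.mul_sum,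
        ← ENNReal.toReal_sum (fun p _ => hBfin p), hmsum w,
        div_mul_cancel₀ _ (hmt_pos w).ne']
    have hfeas : Λ₀ hf := by
      rw [hΛ₀]
      refine ⟨fun p => ?_, fun p => Filter.Eventually.of_forall fun t => hf_nonneg p t,
        fun w => ?_⟩
      · refine MemLp.of_bound ((measurable_const.indicator (hBmeas p)).aestronglyMeasurable)
          (Q (π p) / (m (π p)).toReal) (Filter.Eventually.of_forall fun t => ?_)
        rw [Real.norm_eq_abs, abs_of_nonneg (hf_nonneg p t)]
        by_cases ht : t ∈ B p
        · simp only [hfdef, Set.indicator_of_mem ht]; exact le_rfl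
        · simp only [hfdef, Set.indicator_of_notMem ht]
          exact div_nonneg (hQ _).le ENNReal.toReal_nonneg
      · rw [← hf_fiber_sum w]
        exact Finset.sum_congr rfl fun p _ => hint _
    have hcost : ∀ p, ∫ t, c p t * hf p t ∂μ ≤ (v (π p) + ε) * ∫ t, hf p t ∂μ := by
      intro p
      rw [← integral_const_mul]
      refine integral_mono (hch_int p _ (hf_int p)) ((hf_int p).const_mul _) fun t => ?_
      by_cases ht : t ∈ B p
      · exact mul_le_mul_of_nonneg_right (le_of_lt ht.1.2) (hf_nonneg p t)
      · simp only [hfdef, Set.indicator_of_notMem ht, mul_zero, le_refl]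
    have hVIh := hVI hf hfeas
    have hdiff : ∑ p : P, ∫ t in t₀..tf, c p t * (hf p t - hstar p t)
        = (∑ p : P, ∫ t, c p t * hf p t ∂μ) - T := by
      rw [hT, ← Finset.sum_sub_distrib]
      refine Finset.sum_congr rfl fun p _ => ?_
      rw [hint]
      have heq : (fun t => c p t * (hf p t - hstar p t))
          = fun t => c p t * hf p t - c p t * hstar p t := by funext t; ring
      rw [heq, integral_sub (hch_int p _ (hf_int p)) (hch_int p _ (hstar_int p))]
    have hTle2 : T ≤ ∑ p : P, ∫ t, c p t * hf p t ∂μ := by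
      rw [hdiff] at hVIh; linarith
    calc T ≤ ∑ p : P, ∫ t, c p t * hf p t ∂μ := hTle2
      _ ≤ ∑ p : P, (v (π p) + ε) * ∫ t, hf p t ∂μ :=
          Finset.sum_le_sum fun p _ => hcost p
      _ = ∑ w : W, (v w + ε) * Q w := by
          rw [← Finset.sum_fiberwise Finset.univ π
            (fun p => (v (π p) + ε) * ∫ t, hf p t ∂μ)]
          refine Finset.sum_congr rfl fun w _ => ?_
          rw [← hf_fiber_sum w, Finset.mul_sum]
          refine Finset.sum_congr rfl fun p hp => ?_
          rw [(Finset.mem_filter.1 hp).2]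
      _ = (∑ w : W, v w * Q w) + ε * ∑ w : W, Q w := by
          rw [Finset.mul_sum, ← Finset.sum_add_distrib]
          exact Finset.sum_congr rfl fun w _ => by ring
  have hTle : T ≤ ∑ w : W, v w * Q w := by
    refine le_of_forall_pos_le_add fun δ hδ => ?_
    have hS : 0 < ∑ w : W, Q w := Finset.sum_pos (fun w _ => hQ w) Finset.univ_nonempty
    have h := upper (δ / ∑ w : W, Q w) (div_pos hδ hS)
    rwa [div_mul_cancel₀ _ hS.ne'] at h
  have hTeq : T = ∑ w : W, v w * Q w := le_antisymm hTle lower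
  constructor
  · rw [hTint]; exact hTeq
  · intro w p hpw
    have hIsum : ∑ p : P, ∫ t, (c p t - v (π p)) * hstar p t ∂μ = 0 := by
      have := hTsplit; rw [hTeq] at this; linarith
    have hI0 : ∫ t, (c p t - v (π p)) * hstar p t ∂μ = 0 :=
      (Finset.sum_eq_zero_iff_of_nonneg (fun q _ => hIp_nonneg q)).1 hIsum p (Finset.mem_univ p)
    have hae := (integral_eq_zero_iff_of_nonneg_ae (hae_nonneg p) (hcvh_int p)).1 hI0
    filter_upwards [hae] with t ht
    have : (c p t - v (π p)) * hstar p t = 0 := ht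
    rw [← hpw]; linarith [mul_comm (hstar p t) (c p t - v (π p))]
end

section
/- Let τ₁(t) = t + A + B·x(t), t₁ = A, and t₂ = τ₁(t₁), and let τ₁⁻¹ : [t₁,t₂] → [0,t₁] denote the inverse of τ₁ (which exists since τ₁ is strictly increasing with τ₁(0) = t₁). Define the second-interval exit time function τ₂(t) = t + A + B·∫_{τ₁⁻¹(t)}^{t} u(s) ds for t ∈ [t₁, t₂]. Then τ₂(t₁) = τ₁(t₁) = t₂, τ₂ is differentiable on [t₁,t₂] with τ₂′(t) = B·u(t) + 1/(1 + B·u(τ₁⁻¹(t))), and in particular τ₂′(t) > B·u(t) ≥ 0 for all t ∈ [t₁,t₂], so τ₂ is strictly increasing on [t₁,t₂]. -/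
/-- With `τ₁ t = t + A + B·x t`, `t₁ = A`, `t₂ = τ₁ t₁`, and `τinv` the
inverse of `τ₁` mapping `[t₁,t₂]` back to `[0,t₁]`, the second-interval exit time
function `τ₂ t = t + A + B·∫_{τinv t}^{t} u` satisfies `τ₂ t₁ = τ₁ t₁ = t₂`, is
differentiable on `[t₁,t₂]` with `τ₂' t = B·u t + 1/(1 + B·u (τinv t))`, and in
particular `τ₂' t > B·u t ≥ 0`, so `τ₂` is strictly increasing on `[t₁,t₂]`. -/
theorem second_interval_exit_time_strict_mono
    (A B : ℝ) (hA : 0 < A) (hB : 0 < B)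
    (upr utr : ℝ → ℝ) (hupr_cont : Continuous upr) (hutr_cont : Continuous utr)
    (hupr_nonneg : ∀ t, 0 ≤ upr t) (hutr_nonneg : ∀ t, 0 ≤ utr t)
    (β : ℝ) (hβ : 1 ≤ β)
    (u : ℝ → ℝ) (hu : ∀ t, u t = upr t + β * utr t)
    (x : ℝ → ℝ) (hx : ∀ t, x t = ∫ s in (0:ℝ)..t, u s)
    (τ₁ : ℝ → ℝ) (hτ₁ : ∀ t, τ₁ t = t + A + B * x t)
    (t₁ t₂ : ℝ) (ht₁ : t₁ = A) (ht₂ : t₂ = τ₁ t₁)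
    (τinv : ℝ → ℝ)
    (hinv_left : ∀ t ∈ Set.Icc (0:ℝ) t₁, τinv (τ₁ t) = t)
    (hinv_right : ∀ t ∈ Set.Icc t₁ t₂, τ₁ (τinv t) = t ∧ τinv t ∈ Set.Icc (0:ℝ) t₁)
    (τ₂ : ℝ → ℝ) (hτ₂ : ∀ t, τ₂ t = t + A + B * ∫ s in (τinv t)..t, u s) :
    τ₂ t₁ = τ₁ t₁ ∧ τ₂ t₁ = t₂ ∧
    (∀ t ∈ Set.Icc t₁ t₂,
      HasDerivWithinAt τ₂ (B * u t + 1 / (1 + B * u (τinv t))) (Set.Icc t₁ t₂) t) ∧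
    (∀ t ∈ Set.Icc t₁ t₂, B * u t < B * u t + 1 / (1 + B * u (τinv t))) ∧
    (∀ t, 0 ≤ B * u t) ∧
    StrictMonoOn τ₂ (Set.Icc t₁ t₂) := by
  -- basic facts about u and x
  have hu_cont : Continuous u := by
    have h : Continuous fun t => upr t + β * utr t := by continuity
    simpa [funext hu] using h
  have hu_nonneg : ∀ t, 0 ≤ u t := fun t => by
    rw [hu]
    have : 0 ≤ β * utr t := mul_nonneg (by linarith) (hutr_nonneg t)
    linarith [hupr_nonneg t]
  have hx_deriv : ∀ t, HasDerivAt x (u t) t := fun t => by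
    have h := (hu_cont.integral_hasStrictDerivAt 0 t).hasDerivAt
    exact h.congr_of_eventuallyEq (by filter_upwards with s using (hx s))
  have hx_nonneg : ∀ t, 0 ≤ t → 0 ≤ x t := fun t ht => by
    rw [hx]
    exact intervalIntegral.integral_nonneg ht fun s _ => hu_nonneg s
  have hx_nonpos : ∀ t, t ≤ 0 → x t ≤ 0 := fun t ht => by
    rw [hx, ← neg_nonneg, ← intervalIntegral.integral_symm]
    exact intervalIntegral.integral_nonneg ht fun s _ => hu_nonneg s
  have hτ₁_deriv : ∀ t, HasDerivAt τ₁ (1 + B * u t) t := fun t => by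
    have h : HasDerivAt (fun s => s + A + B * x s) (1 + B * u t) t := by
      have := (((hasDerivAt_id t).add_const A)).add ((hx_deriv t).const_mul B)
      exact this
    exact h.congr_of_eventuallyEq (by filter_upwards with s using (hτ₁ s))
  have hpos : ∀ t, (0:ℝ) < 1 + B * u t := fun t => by
    have := mul_nonneg hB.le (hu_nonneg t); linarith
  have hτ₁_mono : StrictMono τ₁ :=
    strictMono_of_deriv_pos fun t => by rw [(hτ₁_deriv t).deriv]; exact hpos t
  have hτ₁_cont : Continuous τ₁ :=
    continuous_iff_continuousAt.2 fun t => (hτ₁_deriv t).continuousAt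
  -- surjectivity of τ₁
  have htop : Filter.Tendsto τ₁ Filter.atTop Filter.atTop := by
    apply Filter.tendsto_atTop_mono' _ _ Filter.tendsto_id
    filter_upwards [Filter.eventually_ge_atTop (0:ℝ)] with t ht
    have := hx_nonneg t ht
    simp only [hτ₁, id]
    nlinarith
  have hbot : Filter.Tendsto τ₁ Filter.atBot Filter.atBot := by
    apply Filter.tendsto_atBot_mono' _ _ (Filter.tendsto_atBot_add_const_right _ A
      Filter.tendsto_id)
    filter_upwards [Filter.eventually_le_atBot (0:ℝ)] with t ht
    have := hx_nonpos t ht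
    simp only [hτ₁, id]
    nlinarith
  have hsurj : Function.Surjective τ₁ := hτ₁_cont.surjective htop hbot
  -- the global inverse g of τ₁
  set e := StrictMono.orderIsoOfSurjective τ₁ hτ₁_mono hsurj with he
  set g : ℝ → ℝ := fun y => e.symm y with hg
  have hfg : ∀ y, τ₁ (g y) = y := fun y =>
    StrictMono.orderIsoOfSurjective_self_symm_apply τ₁ hτ₁_mono hsurj y
  have hg_cont : Continuous g := (e.symm).continuous
  have hg_deriv : ∀ y, HasDerivAt g (1 + B * u (g y))⁻¹ y := fun y =>
    HasDerivAt.of_local_left_inverse (hg_cont.continuousAt) (hτ₁_deriv (g y))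
      (ne_of_gt (hpos (g y))) (Filter.Eventually.of_forall hfg)
  -- τinv agrees with g on [t₁, t₂]
  have hinv_eq : ∀ t ∈ Set.Icc t₁ t₂, τinv t = g t := fun t ht => by
    have h1 := (hinv_right t ht).1
    have h2 := hfg t
    exact hτ₁_mono.injective (h1.trans h2.symm)
  -- F is a globally defined version of τ₂
  set F : ℝ → ℝ := fun t => 2 * A + B * x t + g t with hF
  have hF_deriv : ∀ t, HasDerivAt F (B * u t + (1 + B * u (g t))⁻¹) t := fun t => by
    have := (((hx_deriv t).const_mul B).const_add (2 * A)).add (hg_deriv t)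
    exact this
  have hτ₂F : ∀ t ∈ Set.Icc t₁ t₂, τ₂ t = F t := fun t ht => by
    have hint : (∫ s in (τinv t)..t, u s) = x t - x (τinv t) := by
      rw [hx t, hx (τinv t)]
      exact (intervalIntegral.integral_interval_sub_left
        (hu_cont.intervalIntegrable _ _) (hu_cont.intervalIntegrable _ _)).symm
    have h1 := (hinv_right t ht).1
    rw [hτ₁ (τinv t)] at h1
    have h2 := hinv_eq t ht
    rw [hτ₂, hint, hF]
    simp only []
    rw [← h2]
    linarith [h1]
  have hderiv : ∀ t ∈ Set.Icc t₁ t₂,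
      HasDerivWithinAt τ₂ (B * u t + 1 / (1 + B * u (τinv t))) (Set.Icc t₁ t₂) t := by
    intro t ht
    have h := (hF_deriv t).hasDerivWithinAt (s := Set.Icc t₁ t₂)
    have h' := h.congr (fun y hy => hτ₂F y hy) (hτ₂F t ht)
    rw [hinv_eq t ht, one_div]
    exact h'
  have hlt : ∀ t ∈ Set.Icc t₁ t₂, B * u t < B * u t + 1 / (1 + B * u (τinv t)) := by
    intro t ht
    have : 0 < 1 / (1 + B * u (τinv t)) := one_div_pos.2 (hpos (τinv t))
    linarith
  have hBu_nonneg : ∀ t, 0 ≤ B * u t := fun t => mul_nonneg hB.le (hu_nonneg t)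
  -- F is strictly monotone
  have hF_mono : StrictMono F := strictMono_of_deriv_pos fun t => by
    rw [(hF_deriv t).deriv]
    have h1 : 0 < (1 + B * u (g t))⁻¹ := inv_pos.2 (hpos (g t))
    linarith [hBu_nonneg t]
  -- τ₂ t₁ = τ₁ t₁
  have hx0 : x 0 = 0 := by rw [hx]; simp
  have hτ₁0 : τ₁ 0 = t₁ := by rw [hτ₁, hx0, ht₁]; ring
  have hinv_t₁ : τinv t₁ = 0 := by
    have := hinv_left 0 ⟨le_refl 0, by rw [ht₁]; exact hA.le⟩
    rwa [hτ₁0] at this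
  have hτ₂t₁ : τ₂ t₁ = τ₁ t₁ := by
    rw [hτ₂, hinv_t₁, hτ₁, hx]
  refine ⟨hτ₂t₁, hτ₂t₁.trans ht₂.symm, hderiv, hlt, hBu_nonneg, ?_⟩
  intro a ha b hb hab
  rw [hτ₂F a ha, hτ₂F b hb]
  exact hF_mono hab
end

section
/- (Inductive step for exit-time monotonicity.) Let a < b be reals and let τ : [a,b] → ℝ be differentiable with τ(a) = b and, for all s ∈ [a,b], τ′(s) > 0 and τ′(s) > B·u(s). Set c = τ(b) and let τ⁻¹ : [b,c] → [a,b] be the inverse of τ. Define σ(t) = t + A + B·∫_{τ⁻¹(t)}^{t} u(s) ds for t ∈ [b,c]. Then σ is differentiable on [b,c] with σ′(t) = 1 + B·u(t) − B·u(τ⁻¹(t))/τ′(τ⁻¹(t)), and for all t ∈ [b,c] one has σ′(t) > B·u(t) and σ′(t) > 0; in particular σ is strictly increasing on [b,c]. -/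
/-- inductive step for exit-time monotonicity: If `τ : [a,b] → ℝ` is
differentiable with `τ a = b`, `τ' s > 0` and `τ' s > B·u s` on `[a,b]`, `c = τ b`, and
`τinv : [b,c] → [a,b]` is the inverse of `τ`, then
`σ t = t + A + B·∫_{τinv t}^{t} u` is differentiable on `[b,c]` with
`σ' t = 1 + B·u t − B·u (τinv t)/τ' (τinv t)`, and `σ' t > B·u t`, `σ' t > 0`; in
particular `σ` is strictly increasing on `[b,c]`. -/
theorem exit_time_inductive_step
    (A B : ℝ) (hA : 0 < A) (hB : 0 < B)
    (upr utr : ℝ → ℝ) (hupr_cont : Continuous upr) (hutr_cont : Continuous utr)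
    (hupr_nonneg : ∀ t, 0 ≤ upr t) (hutr_nonneg : ∀ t, 0 ≤ utr t)
    (β : ℝ) (hβ : 1 ≤ β)
    (u : ℝ → ℝ) (hu : ∀ t, u t = upr t + β * utr t)
    (a b : ℝ) (hab : a < b)
    (τ τ' : ℝ → ℝ)
    (hτ_deriv : ∀ s ∈ Set.Icc a b, HasDerivWithinAt τ (τ' s) (Set.Icc a b) s)
    (hτa : τ a = b)
    (hτ'_pos : ∀ s ∈ Set.Icc a b, 0 < τ' s)
    (hτ'_gt : ∀ s ∈ Set.Icc a b, B * u s < τ' s)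
    (c : ℝ) (hc : c = τ b)
    (τinv : ℝ → ℝ)
    (hinv_left : ∀ s ∈ Set.Icc a b, τinv (τ s) = s)
    (hinv_right : ∀ t ∈ Set.Icc b c, τ (τinv t) = t ∧ τinv t ∈ Set.Icc a b)
    (σ : ℝ → ℝ) (hσ : ∀ t, σ t = t + A + B * ∫ s in (τinv t)..t, u s) :
    (∀ t ∈ Set.Icc b c,
      HasDerivWithinAt σ (1 + B * u t - B * u (τinv t) / τ' (τinv t)) (Set.Icc b c) t) ∧
    (∀ t ∈ Set.Icc b c, B * u t < 1 + B * u t - B * u (τinv t) / τ' (τinv t)) ∧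
    (∀ t ∈ Set.Icc b c, 0 < 1 + B * u t - B * u (τinv t) / τ' (τinv t)) ∧
    StrictMonoOn σ (Set.Icc b c) := by
  -- continuity and nonnegativity of u
  have hu_cont : Continuous u := by
    have : u = fun t => upr t + β * utr t := funext hu
    rw [this]; exact hupr_cont.add (continuous_const.mul hutr_cont)
  have hu_nonneg : ∀ t, 0 ≤ u t := fun t => by
    rw [hu t]
    exact add_nonneg (hupr_nonneg t) (mul_nonneg (by linarith) (hutr_nonneg t))
  -- τ is strictly monotone on [a,b]
  have hτ_cont : ContinuousOn τ (Set.Icc a b) := fun s hs =>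
    (hτ_deriv s hs).continuousWithinAt
  have hτ_mono : StrictMonoOn τ (Set.Icc a b) := by
    apply strictMonoOn_of_deriv_pos (convex_Icc a b) hτ_cont
    intro x hx
    rw [interior_Icc] at hx
    have hx' : x ∈ Set.Icc a b := Set.mem_Icc_of_Ioo hx
    have hd : HasDerivAt τ (τ' x) x :=
      (hτ_deriv x hx').hasDerivAt (Icc_mem_nhds hx.1 hx.2)
    rw [hd.deriv]; exact hτ'_pos x hx'
  -- τinv is continuous within [b,c]
  have hinv_cont : ∀ t₀ ∈ Set.Icc b c, ContinuousWithinAt τinv (Set.Icc b c) t₀ := by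
    intro t₀ ht₀
    obtain ⟨hτinv_t₀, hs₀⟩ := hinv_right t₀ ht₀
    rw [ContinuousWithinAt]
    apply tendsto_order.2
    constructor
    · intro x hx
      by_cases hxa : x < a
      · filter_upwards [self_mem_nhdsWithin] with t ht
        exact lt_of_lt_of_le hxa (hinv_right t ht).2.1
      · push_neg at hxa
        have hxab : x ∈ Set.Icc a b := ⟨hxa, le_trans hx.le hs₀.2⟩
        have hτx : τ x < t₀ := by
          have := hτ_mono hxab hs₀ hx
          rwa [hτinv_t₀] at this
        filter_upwards [nhdsWithin_le_nhds (Ioi_mem_nhds hτx), self_mem_nhdsWithin]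
          with t ht hmem
        by_contra hcon
        push_neg at hcon
        have := hτ_mono.monotoneOn (hinv_right t hmem).2 hxab hcon
        rw [(hinv_right t hmem).1] at this
        exact absurd (Set.mem_Ioi.mp ht) (not_lt.2 this)
    · intro x hx
      by_cases hxb : b < x
      · filter_upwards [self_mem_nhdsWithin] with t ht
        exact lt_of_le_of_lt (hinv_right t ht).2.2 hxb
      · push_neg at hxb
        have hxab : x ∈ Set.Icc a b := ⟨le_trans hs₀.1 hx.le, hxb⟩
        have hτx : t₀ < τ x := by
          have := hτ_mono hs₀ hxab hx
          rwa [hτinv_t₀] at this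
        filter_upwards [nhdsWithin_le_nhds (Iio_mem_nhds hτx), self_mem_nhdsWithin]
          with t ht hmem
        by_contra hcon
        push_neg at hcon
        have := hτ_mono.monotoneOn hxab (hinv_right t hmem).2 hcon
        rw [(hinv_right t hmem).1] at this
        exact absurd (Set.mem_Iio.mp ht) (not_lt.2 this)
  -- derivative of τinv within [b,c]
  have hinv_deriv : ∀ t₀ ∈ Set.Icc b c,
      HasDerivWithinAt τinv (τ' (τinv t₀))⁻¹ (Set.Icc b c) t₀ := by
    intro t₀ ht₀
    obtain ⟨hτinv_t₀, hs₀⟩ := hinv_right t₀ ht₀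
    set s₀ := τinv t₀ with hs₀def
    rw [hasDerivWithinAt_iff_tendsto_slope]
    have hτslope : Filter.Tendsto (slope τ s₀) (nhdsWithin s₀ (Set.Icc a b \ {s₀}))
        (nhds (τ' s₀)) := by
      have := hτ_deriv s₀ hs₀
      rw [hasDerivWithinAt_iff_tendsto_slope] at this
      exact this
    have h1 : Filter.Tendsto τinv (nhdsWithin t₀ (Set.Icc b c \ {t₀}))
        (nhdsWithin s₀ (Set.Icc a b \ {s₀})) := by
      apply tendsto_nhdsWithin_of_tendsto_nhds_of_eventually_within
      · exact ((hinv_cont t₀ ht₀).mono Set.diff_subset)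
      · filter_upwards [self_mem_nhdsWithin] with t ht
        refine ⟨(hinv_right t ht.1).2, fun hcon => ?_⟩
        apply ht.2
        have : τ (τinv t) = τ s₀ := by rw [Set.mem_singleton_iff.mp hcon]
        rw [(hinv_right t ht.1).1, hτinv_t₀] at this
        exact this
    have h2 : Filter.Tendsto (fun t => (slope τ s₀ (τinv t))⁻¹)
        (nhdsWithin t₀ (Set.Icc b c \ {t₀})) (nhds (τ' s₀)⁻¹) :=
      (hτslope.comp h1).inv₀ (ne_of_gt (hτ'_pos s₀ hs₀))
    apply h2.congr'
    filter_upwards [self_mem_nhdsWithin] with t ht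
    rw [slope_def_field, slope_def_field, inv_div, (hinv_right t ht.1).1, hτinv_t₀]
  -- antiderivative of u
  set F : ℝ → ℝ := fun x => ∫ s in a..x, u s with hF_def
  have hF : ∀ x, HasDerivAt F (u x) x := fun x =>
    (hu_cont.integral_hasStrictDerivAt a x).hasDerivAt
  -- σ equals t + A + B*(F t - F (τinv t))
  have hσ_eq : ∀ t ∈ Set.Icc b c, σ t = t + A + B * (F t - F (τinv t)) := by
    intro t _
    rw [hσ t, hF_def]
    congr 1
    rw [intervalIntegral.integral_interval_sub_left (hu_cont.intervalIntegrable a t)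
      (hu_cont.intervalIntegrable a (τinv t))]
  -- main derivative statement
  have main : ∀ t ∈ Set.Icc b c,
      HasDerivWithinAt σ (1 + B * u t - B * u (τinv t) / τ' (τinv t)) (Set.Icc b c) t := by
    intro t ht
    have hd : HasDerivWithinAt (fun x => x + A + B * (F x - F (τinv x)))
        (1 + B * (u t - u (τinv t) * (τ' (τinv t))⁻¹)) (Set.Icc b c) t := by
      have hFt : HasDerivWithinAt F (u t) (Set.Icc b c) t := (hF t).hasDerivWithinAt
      have hFinv : HasDerivWithinAt (fun x => F (τinv x)) (u (τinv t) * (τ' (τinv t))⁻¹)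
          (Set.Icc b c) t :=
        (hF (τinv t)).comp_hasDerivWithinAt t (hinv_deriv t ht)
      have := ((hasDerivWithinAt_id t (Set.Icc b c)).add_const A).add
        ((hFt.sub hFinv).const_mul B)
      exact this
    have heq : (1 + B * (u t - u (τinv t) * (τ' (τinv t))⁻¹)) =
        1 + B * u t - B * u (τinv t) / τ' (τinv t) := by
      rw [div_eq_mul_inv]; ring
    rw [← heq]
    exact hd.congr (fun x hx => hσ_eq x hx) (hσ_eq t ht)
  -- inequalities
  have ineq1 : ∀ t ∈ Set.Icc b c, B * u t < 1 + B * u t - B * u (τinv t) / τ' (τinv t) := by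
    intro t ht
    have hs := (hinv_right t ht).2
    have h1 : B * u (τinv t) < τ' (τinv t) := hτ'_gt _ hs
    have h2 : 0 < τ' (τinv t) := hτ'_pos _ hs
    have : B * u (τinv t) / τ' (τinv t) < 1 := (div_lt_one h2).2 h1
    have : B * u (τinv t) / τ' (τinv t) = B * (u (τinv t)) / τ' (τinv t) := rfl
    nlinarith [(div_lt_one h2).2 h1]
  have ineq2 : ∀ t ∈ Set.Icc b c, 0 < 1 + B * u t - B * u (τinv t) / τ' (τinv t) := by
    intro t ht
    have h1 := ineq1 t ht
    have h2 : 0 ≤ B * u t := mul_nonneg hB.le (hu_nonneg t)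
    linarith
  refine ⟨main, ineq1, ineq2, ?_⟩
  -- strict monotonicity
  apply strictMonoOn_of_deriv_pos (convex_Icc b c)
    (fun t ht => (main t ht).continuousWithinAt)
  intro x hx
  rw [interior_Icc] at hx
  have hx' : x ∈ Set.Icc b c := Set.mem_Icc_of_Ioo hx
  have hd : HasDerivAt σ (1 + B * u x - B * u (τinv x) / τ' (τinv x)) x :=
    (main x hx').hasDerivAt (Icc_mem_nhds hx.1 hx.2)
  rw [hd.deriv]
  exact ineq2 x hx'
end

section
/- (FIFO for linear arc delay with inhomogeneous traffic.) Define recursively: t₀ = 0, t₁ = A, τ₁(t) = t + A + B·∫₀ᵗ u(s) ds for t ∈ [t₀,t₁]; and for each k ≥ 1, t_{k+1} = τ_k(t_k) and τ_{k+1}(t) = t + A + B·∫_{τ_k⁻¹(t)}^{t} u(s) ds for t ∈ [t_k, t_{k+1}]. Then for every k ≥ 1: τ_k is well-defined, differentiable, and strictly increasing on [t_{k-1}, t_k] with τ_k′(t) > B·u(t) ≥ 0, τ_k maps [t_{k-1}, t_k] bijectively onto [t_k, t_{k+1}], and τ_{k+1}(t_k) = τ_k(t_k). Consequently the concatenated arc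 exit-time function τ, defined by τ(t) = τ_k(t) for t ∈ [t_{k-1}, t_k], is continuous and strictly increasing on [0, sup_k t_k); hence the first-in-first-out rule holds: for all s < t in [0, sup_k t_k), τ(s) < τ(t). -/
open Set Filter Function Topology

noncomputable def fifoStep (A B : ℝ) (x : ℝ → ℝ) (p : ℝ × ℝ × (ℝ → ℝ)) : ℝ × ℝ × (ℝ → ℝ) :=
  (p.2.1, p.2.2 p.2.1,
    fun t => t + A + B * (x t - x (Function.invFunOn p.2.2 (Set.Icc p.1 p.2.1) t)))

noncomputable def fifoSeq (A B : ℝ) (x : ℝ → ℝ) : ℕ → ℝ × ℝ × (ℝ → ℝ)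
  | 0 => (0, A, fun t => t + A + B * x t)
  | (j+1) => fifoStep A B x (fifoSeq A B x j)

noncomputable def fifoTk (A B : ℝ) (x : ℝ → ℝ) : ℕ → ℝ
  | 0 => 0
  | (k+1) => (fifoSeq A B x k).2.1

noncomputable def fifoTau (A B : ℝ) (x : ℝ → ℝ) (k : ℕ) : ℝ → ℝ :=
  (fifoSeq A B x (k-1)).2.2

noncomputable def fifoT (A B : ℝ) (x : ℝ → ℝ) (r : ℝ) : ℝ :=
  fifoTau A B x (sInf {m | 1 ≤ m ∧ r ≤ fifoTk A B x m}) r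

lemma fifoTk_zero (A B : ℝ) (x : ℝ → ℝ) : fifoTk A B x 0 = 0 := rfl
lemma fifoTk_one (A B : ℝ) (x : ℝ → ℝ) : fifoTk A B x 1 = A := rfl
lemma fifoTau_one (A B : ℝ) (x : ℝ → ℝ) : fifoTau A B x 1 = fun t => t + A + B * x t := rfl

lemma fifoSeq_fst (A B : ℝ) (x : ℝ → ℝ) (j : ℕ) :
    (fifoSeq A B x j).1 = fifoTk A B x j := by
  cases j with
  | zero => rfl
  | succ i => rfl

lemma fifoTk_succ_eq (A B : ℝ) (x : ℝ → ℝ) (j : ℕ) :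
    fifoTk A B x (j+2) = fifoTau A B x (j+1) (fifoTk A B x (j+1)) := rfl

lemma fifoTau_succ_formula (A B : ℝ) (x : ℝ → ℝ) (j : ℕ) :
    fifoTau A B x (j+2) = fun t => t + A + B *
      (x t - x (Function.invFunOn (fifoTau A B x (j+1))
        (Set.Icc (fifoTk A B x j) (fifoTk A B x (j+1))) t)) := by
  have h1 := fifoSeq_fst A B x j
  show (fifoSeq A B x (j+1)).2.2 = _
  rw [show fifoSeq A B x (j+1) = fifoStep A B x (fifoSeq A B x j) from rfl]
  unfold fifoStep
  rw [h1]
  rfl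

open Set Filter Function

lemma fifo_strictMonoOn {g : ℝ → ℝ} {a b : ℝ} {u : ℝ → ℝ} {B : ℝ}
    (hB : ∀ t, 0 ≤ B * u t)
    (h : ∀ t ∈ Set.Icc a b, ∃ d, HasDerivWithinAt g d (Set.Icc a b) t ∧ B * u t < d) :
    StrictMonoOn g (Set.Icc a b) := by
  have hc : ContinuousOn g (Set.Icc a b) := fun t ht =>
    ((h t ht).choose_spec.1).continuousWithinAt
  apply strictMonoOn_of_deriv_pos (convex_Icc a b) hc
  intro t ht
  rw [interior_Icc] at ht
  obtain ⟨d, hd, hlt⟩ := h t (Set.mem_Icc_of_Ioo ht)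
  have h' : HasDerivAt g d t := hd.hasDerivAt (Icc_mem_nhds ht.1 ht.2)
  rw [h'.deriv]
  exact lt_of_le_of_lt (hB t) hlt

lemma fifo_bijOn {g : ℝ → ℝ} {a b : ℝ} (hab : a ≤ b)
    (hc : ContinuousOn g (Set.Icc a b)) (hm : StrictMonoOn g (Set.Icc a b)) :
    Set.BijOn g (Set.Icc a b) (Set.Icc (g a) (g b)) := by
  refine ⟨fun t ht => ⟨hm.monotoneOn (Set.left_mem_Icc.2 hab) ht ht.1,
      hm.monotoneOn ht (Set.right_mem_Icc.2 hab) ht.2⟩, hm.injOn, ?_⟩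
  exact fun y hy => intermediate_value_Icc hab hc hy

open Set Filter Function Topology

lemma fifo_inv_hasDerivWithinAt {g σ : ℝ → ℝ} {a b : ℝ} (hab : a ≤ b)
    (hc : ContinuousOn g (Set.Icc a b))
    (hm : StrictMonoOn g (Set.Icc a b))
    (hσg : ∀ s ∈ Set.Icc a b, σ (g s) = s)
    {s d : ℝ} (hs : s ∈ Set.Icc a b)
    (hd : HasDerivWithinAt g d (Set.Icc a b) s) (hd0 : 0 < d) :
    HasDerivWithinAt σ d⁻¹ (Set.Icc (g a) (g b)) (g s) := by
  have hbij : Set.BijOn g (Set.Icc a b) (Set.Icc (g a) (g b)) := by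
    refine ⟨fun t ht => ⟨hm.monotoneOn (Set.left_mem_Icc.2 hab) ht ht.1,
        hm.monotoneOn ht (Set.right_mem_Icc.2 hab) ht.2⟩, hm.injOn, ?_⟩
    exact fun y hy => intermediate_value_Icc hab hc hy
  -- σ maps the image into Icc a b, with g ∘ σ = id there
  have hgσ : ∀ y ∈ Set.Icc (g a) (g b), σ y ∈ Set.Icc a b ∧ g (σ y) = y := by
    intro y hy
    obtain ⟨t, ht, rfl⟩ := hbij.surjOn hy
    rw [hσg t ht]
    exact ⟨ht, rfl⟩
  -- continuity of σ on the image via compactness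
  haveI : CompactSpace (Set.Icc a b) := isCompact_iff_compactSpace.mp isCompact_Icc
  have hmapsto : ∀ p : Set.Icc a b, g (p : ℝ) ∈ Set.Icc (g a) (g b) := fun p =>
    hbij.mapsTo p.2
  let F : Set.Icc a b → Set.Icc (g a) (g b) := fun p => ⟨g p, hmapsto p⟩
  have hFbij : Function.Bijective F := by
    constructor
    · intro p q hpq
      exact Subtype.ext (hbij.injOn p.2 q.2 (congrArg Subtype.val hpq))
    · intro q
      obtain ⟨t, ht, h2⟩ := hbij.surjOn q.2
      exact ⟨⟨t, ht⟩, Subtype.ext h2⟩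
  let e : Set.Icc a b ≃ Set.Icc (g a) (g b) := Equiv.ofBijective F hFbij
  have hec : Continuous e := by
    apply Continuous.subtype_mk
    exact hc.restrict
  let H := hec.homeoOfEquivCompactToT2
  have hσc : ContinuousOn σ (Set.Icc (g a) (g b)) := by
    rw [continuousOn_iff_continuous_restrict]
    have hr : (Set.Icc (g a) (g b)).restrict σ = fun q => ((H.symm q : Set.Icc a b) : ℝ) := by
      funext q
      have h1 : e (H.symm q) = q := H.apply_symm_apply q
      have h2 : g ((H.symm q : Set.Icc a b) : ℝ) = (q : ℝ) := congrArg Subtype.val h1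
      show σ (q : ℝ) = _
      rw [← h2, hσg _ (H.symm q).2]
    change Continuous ((Set.Icc (g a) (g b)).restrict σ)
    rw [hr]
    exact continuous_subtype_val.comp H.symm.continuous
  -- key filter convergence
  have hmem : g s ∈ Set.Icc (g a) (g b) := hbij.mapsTo hs
  have htend : Filter.Tendsto σ (𝓝[Set.Icc (g a) (g b) \ {g s}] (g s))
      (𝓝[Set.Icc a b \ {s}] s) := by
    rw [tendsto_nhdsWithin_iff]
    constructor
    · have h1 : Filter.Tendsto σ (𝓝[Set.Icc (g a) (g b)] (g s)) (𝓝 (σ (g s))) := hσc _ hmem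
      rw [hσg s hs] at h1
      exact h1.mono_left (nhdsWithin_mono _ Set.diff_subset)
    · filter_upwards [self_mem_nhdsWithin] with y hy
      obtain ⟨hy1, hy2⟩ := hy
      obtain ⟨hσy, hgσy⟩ := hgσ y hy1
      refine ⟨hσy, ?_⟩
      intro hcon
      apply hy2
      rw [Set.mem_singleton_iff, ← hgσy, hcon]
  have hslope : Filter.Tendsto (slope g s) (𝓝[Set.Icc a b \ {s}] s) (𝓝 d) :=
    hasDerivWithinAt_iff_tendsto_slope.mp hd
  have hinv : Filter.Tendsto (fun y => (slope g s y)⁻¹) (𝓝[Set.Icc a b \ {s}] s) (𝓝 d⁻¹) :=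
    hslope.inv₀ (ne_of_gt hd0)
  rw [hasDerivWithinAt_iff_tendsto_slope]
  have hcomp := hinv.comp htend
  apply hcomp.congr'
  filter_upwards [self_mem_nhdsWithin] with y hy
  obtain ⟨hy1, hy2⟩ := hy
  obtain ⟨hσy, hgσy⟩ := hgσ y hy1
  show (slope g s (σ y))⁻¹ = slope σ (g s) y
  rw [slope_def_field, slope_def_field, hσg s hs, hgσy, inv_div]

lemma fifo_main {A B : ℝ} {u x : ℝ → ℝ} (hA : 0 < A) (hB : 0 < B)
    (hu0 : ∀ t, 0 ≤ u t)
    (hxd : ∀ t, HasDerivAt x (u t) t)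
    (hx_mono : Monotone x) (hx0 : x 0 = 0) :
    ∀ j : ℕ,
      fifoTk A B x j < fifoTk A B x (j+1) ∧
      (∀ t ∈ Set.Icc (fifoTk A B x j) (fifoTk A B x (j+1)),
        ∃ d, HasDerivWithinAt (fifoTau A B x (j+1)) d
          (Set.Icc (fifoTk A B x j) (fifoTk A B x (j+1))) t ∧ B * u t < d) ∧
      fifoTau A B x (j+1) (fifoTk A B x j) = fifoTk A B x (j+1) ∧
      fifoTau A B x (j+1) (fifoTk A B x (j+1)) =
        fifoTk A B x (j+1) + A + B * (x (fifoTk A B x (j+1)) - x (fifoTk A B x j)) := by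
  have hBu0 : ∀ t, 0 ≤ B * u t := fun t => mul_nonneg hB.le (hu0 t)
  intro j
  induction j with
  | zero =>
    rw [fifoTk_zero, fifoTk_one, fifoTau_one]
    refine ⟨hA, ?_, ?_, ?_⟩
    · intro t _
      refine ⟨1 + B * u t, ?_, lt_one_add _⟩
      exact (((hasDerivAt_id t).add_const A).add ((hxd t).const_mul B)).hasDerivWithinAt
    · simp [hx0]
    · rw [hx0]; ring
  | succ j IH =>
    obtain ⟨hlt, hderiv, hga, hgb⟩ := IH
    set a := fifoTk A B x j with ha_def
    set b := fifoTk A B x (j+1) with hb_def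
    set g := fifoTau A B x (j+1) with hg_def
    have hmono : StrictMonoOn g (Set.Icc a b) := fifo_strictMonoOn hBu0 hderiv
    have hcont : ContinuousOn g (Set.Icc a b) := fun t ht =>
      ((hderiv t ht).choose_spec.1).continuousWithinAt
    have hbij : Set.BijOn g (Set.Icc a b) (Set.Icc b (g b)) := by
      have := fifo_bijOn hlt.le hcont hmono
      rwa [hga] at this
    set σ := Function.invFunOn g (Set.Icc a b) with hσ_def
    have hσleft : ∀ s ∈ Set.Icc a b, σ (g s) = s := fun s hs =>
      hmono.injOn.leftInvOn_invFunOn hs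
    have hgσ : ∀ y ∈ Set.Icc b (g b), σ y ∈ Set.Icc a b ∧ g (σ y) = y := by
      intro y hy
      obtain ⟨t, ht, rfl⟩ := hbij.surjOn hy
      rw [hσleft t ht]
      exact ⟨ht, rfl⟩
    have hb2 : fifoTk A B x (j+2) = g b := fifoTk_succ_eq A B x j
    have hτ2 : fifoTau A B x (j+2) = fun t => t + A + B * (x t - x (σ t)) :=
      fifoTau_succ_formula A B x j
    have hbb : b < g b := by
      rw [hgb]
      have h1 : 0 ≤ B * (x b - x a) := mul_nonneg hB.le (sub_nonneg.2 (hx_mono hlt.le))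
      linarith
    refine ⟨?_, ?_, ?_, ?_⟩
    · rw [hb2]; exact hbb
    · intro t ht
      rw [hb2] at ht
      obtain ⟨hσmem, hgσt⟩ := hgσ t ht
      obtain ⟨d, hdg, hdlt⟩ := hderiv (σ t) hσmem
      have hd0 : 0 < d := lt_of_le_of_lt (hBu0 _) hdlt
      have hinv : HasDerivWithinAt σ d⁻¹ (Set.Icc (g a) (g b)) (g (σ t)) :=
        fifo_inv_hasDerivWithinAt hlt.le hcont hmono hσleft hσmem hdg hd0
      rw [hgσt, hga] at hinv
      have hMaps : Set.MapsTo σ (Set.Icc b (g b)) (Set.Icc a b) := fun y hy => (hgσ y hy).1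
      have hcomp : HasDerivWithinAt (x ∘ σ) (u (σ t) * d⁻¹) (Set.Icc b (g b)) t :=
        HasDerivWithinAt.comp t ((hxd (σ t)).hasDerivWithinAt) hinv hMaps
      refine ⟨1 + B * (u t - u (σ t) * d⁻¹), ?_, ?_⟩
      · rw [hτ2, hb2]
        have h1 : HasDerivWithinAt (fun r => x r - x (σ r)) (u t - u (σ t) * d⁻¹)
            (Set.Icc b (g b)) t := ((hxd t).hasDerivWithinAt).sub hcomp
        exact ((hasDerivWithinAt_id t _).add_const A).add (h1.const_mul B)
      · have h3 : B * u (σ t) * d⁻¹ < 1 := by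
          rw [← div_eq_mul_inv, div_lt_one hd0]
          exact hdlt
        have h4 : B * (u t - u (σ t) * d⁻¹) = B * u t - B * u (σ t) * d⁻¹ := by ring
        linarith
    · rw [hτ2, hb2]
      have hσb : σ b = a := by
        rw [← hga]
        exact hσleft a (Set.left_mem_Icc.2 hlt.le)
      simp only [hσb]
      exact hgb.symm
    · rw [hτ2, hb2]
      have hσgb : σ (g b) = b := hσleft b (Set.right_mem_Icc.2 hlt.le)
      simp only [hσgb]


/-- FIFO for linear arc delay with inhomogeneous traffic: there exist
breakpoints `t₀ = 0, t₁ = A, t_{k+1} = τ_k (t_k)` and exit-time functions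
`τ₁ t = t + A + B∫₀ᵗ u`, `τ_{k+1} t = t + A + B∫_{τ_k⁻¹ t}ᵗ u`, such that each `τ_k`
is differentiable and strictly increasing on `[t_{k-1}, t_k]` with `τ_k' t > B·u t ≥ 0`,
maps `[t_{k-1}, t_k]` bijectively onto `[t_k, t_{k+1}]`, and `τ_{k+1} (t_k) = τ_k (t_k)`;
consequently the concatenated exit-time function `T` is continuous and strictly
increasing on `[0, sup_k t_k)` and the first-in-first-out rule holds there. -/
theorem fifo_linear_arc_delay
    (A B : ℝ) (hA : 0 < A) (hB : 0 < B)
    (upr utr : ℝ → ℝ) (hupr_cont : Continuous upr) (hutr_cont : Continuous utr)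
    (hupr_nonneg : ∀ t, 0 ≤ upr t) (hutr_nonneg : ∀ t, 0 ≤ utr t)
    (β : ℝ) (hβ : 1 ≤ β)
    (u : ℝ → ℝ) (hu : ∀ t, u t = upr t + β * utr t)
    (x : ℝ → ℝ) (hx : ∀ t, x t = ∫ s in (0:ℝ)..t, u s) :
    ∃ (tk : ℕ → ℝ) (τ : ℕ → ℝ → ℝ) (T : ℝ → ℝ),
      -- the recursive construction
      tk 0 = 0 ∧ tk 1 = A ∧
      (∀ t ∈ Set.Icc (tk 0) (tk 1), τ 1 t = t + A + B * x t) ∧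
      (∀ k : ℕ, 1 ≤ k → tk (k + 1) = τ k (tk k)) ∧
      (∀ k : ℕ, 1 ≤ k → ∀ t ∈ Set.Icc (tk k) (tk (k + 1)),
        ∃ s ∈ Set.Icc (tk (k - 1)) (tk k),
          τ k s = t ∧ τ (k + 1) t = t + A + B * ∫ σ in s..t, u σ) ∧
      -- properties of each exit-time function (k ≥ 1)
      (∀ k : ℕ, 1 ≤ k → ∀ t ∈ Set.Icc (tk (k - 1)) (tk k),
        ∃ d : ℝ, HasDerivWithinAt (τ k) d (Set.Icc (tk (k - 1)) (tk k)) t ∧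
          B * u t < d ∧ 0 ≤ B * u t) ∧
      (∀ k : ℕ, 1 ≤ k → StrictMonoOn (τ k) (Set.Icc (tk (k - 1)) (tk k))) ∧
      (∀ k : ℕ, 1 ≤ k →
        Set.BijOn (τ k) (Set.Icc (tk (k - 1)) (tk k)) (Set.Icc (tk k) (tk (k + 1)))) ∧
      (∀ k : ℕ, 1 ≤ k → τ (k + 1) (tk k) = τ k (tk k)) ∧
      -- the concatenated exit-time function and the FIFO rule on [0, sup_k t_k)
      (∀ k : ℕ, 1 ≤ k → ∀ s ∈ Set.Icc (tk (k - 1)) (tk k), T s = τ k s) ∧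
      ContinuousOn T {r : ℝ | 0 ≤ r ∧ ∃ k : ℕ, r < tk k} ∧
      StrictMonoOn T {r : ℝ | 0 ≤ r ∧ ∃ k : ℕ, r < tk k} ∧
      (∀ s t : ℝ, 0 ≤ s → s < t → (∃ k : ℕ, t < tk k) → T s < T t) := by
  classical
  have hβ0 : 0 ≤ β := le_trans zero_le_one hβ
  have hu_cont : Continuous u := by
    have hfe : u = fun t => upr t + β * utr t := funext hu
    rw [hfe]; exact hupr_cont.add (continuous_const.mul hutr_cont)
  have hu0 : ∀ t, 0 ≤ u t := fun t => by
    rw [hu t]; exact add_nonneg (hupr_nonneg t) (mul_nonneg hβ0 (hutr_nonneg t))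
  have hBu0 : ∀ t, 0 ≤ B * u t := fun t => mul_nonneg hB.le (hu0 t)
  have hxfe : x = fun r => ∫ s in (0:ℝ)..r, u s := funext hx
  have hxd : ∀ t, HasDerivAt x (u t) t := by
    intro t; rw [hxfe]
    exact (hu_cont.integral_hasStrictDerivAt 0 t).hasDerivAt
  have hxsub : ∀ s t : ℝ, x t - x s = ∫ σ in s..t, u σ := by
    intro s t
    rw [hx, hx]
    rw [intervalIntegral.integral_interval_sub_left (hu_cont.intervalIntegrable 0 t)
      (hu_cont.intervalIntegrable 0 s)]
  have hx_mono : Monotone x := by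
    intro s t hst
    have h1 : 0 ≤ x t - x s := by
      rw [hxsub]
      exact intervalIntegral.integral_nonneg hst (fun σ _ => hu0 σ)
    linarith
  have hx0 : x 0 = 0 := by rw [hx]; exact intervalIntegral.integral_same
  have main := fifo_main hA hB hu0 hxd hx_mono hx0
  set tk : ℕ → ℝ := fifoTk A B x with htk_def
  set τ : ℕ → ℝ → ℝ := fifoTau A B x with hτfun_def
  set T : ℝ → ℝ := fifoT A B x with hT_def
  have htk_lt : ∀ j, tk j < tk (j+1) := fun j => (main j).1
  have htk_mono : StrictMono tk := strictMono_nat_of_lt_succ htk_lt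
  have hmonoOn : ∀ j, StrictMonoOn (τ (j+1)) (Set.Icc (tk j) (tk (j+1))) := fun j =>
    fifo_strictMonoOn hBu0 (main j).2.1
  have hcontOn : ∀ j, ContinuousOn (τ (j+1)) (Set.Icc (tk j) (tk (j+1))) := fun j t ht =>
    (((main j).2.1 t ht).choose_spec.1).continuousWithinAt
  have hsucc : ∀ j, tk (j+2) = τ (j+1) (tk (j+1)) := fun j => fifoTk_succ_eq A B x j
  have hbijOn : ∀ j, Set.BijOn (τ (j+1)) (Set.Icc (tk j) (tk (j+1)))
      (Set.Icc (tk (j+1)) (tk (j+2))) := by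
    intro j
    have h1 := fifo_bijOn (htk_lt j).le (hcontOn j) (hmonoOn j)
    rwa [(main j).2.2.1, ← hsucc j] at h1
  have hT_eq : ∀ k : ℕ, 1 ≤ k → ∀ s ∈ Set.Icc (tk (k-1)) (tk k), T s = τ k s := by
    intro k hk s hs
    obtain ⟨j, rfl⟩ : ∃ j, k = j + 1 := ⟨k - 1, (Nat.succ_pred_eq_of_pos hk).symm⟩
    rw [Nat.add_sub_cancel] at hs
    have hne : (j+1) ∈ {m | 1 ≤ m ∧ s ≤ tk m} := ⟨Nat.succ_le_succ (Nat.zero_le j), hs.2⟩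
    have hmem := Nat.sInf_mem (⟨j+1, hne⟩ : {m | 1 ≤ m ∧ s ≤ tk m}.Nonempty)
    have hTs : T s = τ (sInf {m | 1 ≤ m ∧ s ≤ tk m}) s := rfl
    obtain ⟨hm1, hms⟩ := hmem
    have hmle : sInf {m | 1 ≤ m ∧ s ≤ tk m} ≤ j + 1 := Nat.sInf_le hne
    rcases eq_or_lt_of_le hmle with heq | hlt2
    · rw [hTs, heq]
    · have hmj : sInf {m | 1 ≤ m ∧ s ≤ tk m} ≤ j := Nat.lt_succ_iff.mp hlt2
      have h1 : tk (sInf {m | 1 ≤ m ∧ s ≤ tk m}) ≤ tk j := htk_mono.monotone hmj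
      have h2 : s = tk j := le_antisymm (le_trans hms h1) hs.1
      have h3 : tk (sInf {m | 1 ≤ m ∧ s ≤ tk m}) = tk j :=
        le_antisymm h1 (h2 ▸ hms)
      have h4 : sInf {m | 1 ≤ m ∧ s ≤ tk m} = j := htk_mono.injective h3
      obtain ⟨i, rfl⟩ : ∃ i, j = i + 1 := ⟨j - 1, (Nat.succ_pred_eq_of_pos (h4 ▸ hm1)).symm⟩
      rw [hTs, h4, h2]
      have ha : τ (i+1) (tk (i+1)) = tk (i+2) := (hsucc i).symm
      have hb : τ (i+1+1) (tk (i+1)) = tk (i+1+1) := (main (i+1)).2.2.1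
      rw [ha, hb]
  have hfind : ∀ r : ℝ, 0 ≤ r → (∃ k, r < tk k) → ∃ j, tk j ≤ r ∧ r < tk (j+1) := by
    intro r hr hex
    obtain ⟨k, hk⟩ := hex
    have hmem : sInf {m | r < tk m} ∈ {m | r < tk m} := Nat.sInf_mem ⟨k, hk⟩
    cases hn : sInf {m | r < tk m} with
    | zero =>
      rw [hn] at hmem
      have h0 : tk 0 = 0 := rfl
      rw [Set.mem_setOf_eq, h0] at hmem
      linarith
    | succ j =>
      rw [hn] at hmem
      refine ⟨j, ?_, hmem⟩
      have hj : j ∉ {m | r < tk m} :=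
        Nat.notMem_of_lt_sInf (by rw [hn]; exact Nat.lt_succ_self j)
      exact not_lt.mp hj
  have hTval : ∀ (r : ℝ) (j : ℕ), tk j ≤ r → r ≤ tk (j+1) → T r = τ (j+1) r := by
    intro r j h1 h2
    exact hT_eq (j+1) (Nat.succ_le_succ (Nat.zero_le j)) r
      (by rw [Nat.add_sub_cancel]; exact ⟨h1, h2⟩)
  have hSmono : StrictMonoOn T {r : ℝ | 0 ≤ r ∧ ∃ k : ℕ, r < tk k} := by
    intro p hp q hq hpq
    obtain ⟨i, hi1, hi2⟩ := hfind p hp.1 hp.2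
    obtain ⟨j, hj1, hj2⟩ := hfind q hq.1 hq.2
    have hij : i ≤ j := by
      by_contra hcon
      push_neg at hcon
      have h1 : tk (j+1) ≤ tk i := htk_mono.monotone hcon
      linarith
    rw [hTval p i hi1 hi2.le, hTval q j hj1 hj2.le]
    rcases eq_or_lt_of_le hij with rfl | hlt2
    · exact hmonoOn i ⟨hi1, hi2.le⟩ ⟨hj1, hj2.le⟩ hpq
    · have h1 : τ (i+1) p < τ (i+1) (tk (i+1)) :=
        hmonoOn i ⟨hi1, hi2.le⟩ (Set.right_mem_Icc.2 (htk_lt i).le) hi2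
      have h2 : tk (i+2) ≤ tk (j+1) := htk_mono.monotone (by omega)
      have h3 : tk (j+1) ≤ τ (j+1) q := ((hbijOn j).mapsTo ⟨hj1, hj2.le⟩).1
      rw [hsucc i] at h2
      linarith
  have hScont : ContinuousOn T {r : ℝ | 0 ≤ r ∧ ∃ k : ℕ, r < tk k} := by
    intro r hr
    obtain ⟨j, hj1, hj2⟩ := hfind r hr.1 hr.2
    have hcw : ∀ (i : ℕ) (s : ℝ), s ∈ Set.Icc (tk i) (tk (i+1)) →
        ContinuousWithinAt T (Set.Icc (tk i) (tk (i+1))) s := by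
      intro i s hs
      refine ((hcontOn i) s hs).congr ?_ ?_
      · intro y hy; exact hTval y i hy.1 hy.2
      · exact hTval s i hs.1 hs.2
    rcases eq_or_lt_of_le hj1 with heq | hlt2
    · cases j with
      | zero =>
        have hc1 := hcw 0 r ⟨hj1, hj2.le⟩
        apply hc1.mono_of_mem_nhdsWithin
        have hio : Set.Iio (tk 1) ∈ 𝓝[{r : ℝ | 0 ≤ r ∧ ∃ k : ℕ, r < tk k}] r :=
          nhdsWithin_le_nhds (Iio_mem_nhds hj2)
        filter_upwards [hio, self_mem_nhdsWithin] with y hy1 hy2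
        have h0 : tk 0 = 0 := rfl
        exact ⟨h0 ▸ hy2.1, hy1.le⟩
      | succ i =>
        have hr1 : r ∈ Set.Icc (tk i) (tk (i+1)) := ⟨heq ▸ (htk_lt i).le, heq.ge⟩
        have hr2 : r ∈ Set.Icc (tk (i+1)) (tk (i+1+1)) := ⟨heq.le, hj2.le⟩
        have hc1 := hcw i r hr1
        have hc2 := hcw (i+1) r hr2
        have hc3 := hc1.union hc2
        apply hc3.mono_of_mem_nhdsWithin
        have hoo : Set.Ioo (tk i) (tk (i+1+1)) ∈
            𝓝[{r : ℝ | 0 ≤ r ∧ ∃ k : ℕ, r < tk k}] r :=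
          nhdsWithin_le_nhds (Ioo_mem_nhds (heq ▸ htk_lt i) hj2)
        filter_upwards [hoo] with y hy
        rcases le_total y (tk (i+1)) with h | h
        · exact Or.inl ⟨hy.1.le, h⟩
        · exact Or.inr ⟨h, hy.2.le⟩
    · have hc1 := hcw j r ⟨hj1, hj2.le⟩
      apply hc1.mono_of_mem_nhdsWithin
      exact nhdsWithin_le_nhds (Icc_mem_nhds hlt2 hj2)
  refine ⟨tk, τ, T, rfl, rfl, fun t _ => rfl, ?_, ?_, ?_, ?_, ?_, ?_, hT_eq, hScont, hSmono, ?_⟩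
  · -- tk (k+1) = τ k (tk k)
    intro k hk
    obtain ⟨j, rfl⟩ : ∃ j, k = j + 1 := ⟨k - 1, (Nat.succ_pred_eq_of_pos hk).symm⟩
    exact hsucc j
  · -- exists s clause
    intro k hk t ht
    obtain ⟨j, rfl⟩ : ∃ j, k = j + 1 := ⟨k - 1, (Nat.succ_pred_eq_of_pos hk).symm⟩
    rw [Nat.add_sub_cancel]
    obtain ⟨s, hs, hst⟩ := (hbijOn j).surjOn ht
    have hex : ∃ a ∈ Set.Icc (tk j) (tk (j+1)), τ (j+1) a = t := ⟨s, hs, hst⟩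
    have h1 : Function.invFunOn (τ (j+1)) (Set.Icc (tk j) (tk (j+1))) t
        ∈ Set.Icc (tk j) (tk (j+1)) := Function.invFunOn_mem hex
    have h2 : τ (j+1) (Function.invFunOn (τ (j+1)) (Set.Icc (tk j) (tk (j+1))) t) = t :=
      Function.invFunOn_eq hex
    refine ⟨_, h1, h2, ?_⟩
    have h3 : τ (j+2) = fun t => t + A + B *
        (x t - x (Function.invFunOn (τ (j+1)) (Set.Icc (tk j) (tk (j+1))) t)) :=
      fifoTau_succ_formula A B x j
    show τ (j+2) t = _
    rw [h3, ← hxsub]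
  · -- derivative clause
    intro k hk t ht
    obtain ⟨j, rfl⟩ : ∃ j, k = j + 1 := ⟨k - 1, (Nat.succ_pred_eq_of_pos hk).symm⟩
    rw [Nat.add_sub_cancel] at ht ⊢
    obtain ⟨d, hd, hlt⟩ := (main j).2.1 t ht
    exact ⟨d, hd, hlt, hBu0 t⟩
  · -- strict mono clause
    intro k hk
    obtain ⟨j, rfl⟩ : ∃ j, k = j + 1 := ⟨k - 1, (Nat.succ_pred_eq_of_pos hk).symm⟩
    rw [Nat.add_sub_cancel]
    exact hmonoOn j
  · -- bijOn clause
    intro k hk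
    obtain ⟨j, rfl⟩ : ∃ j, k = j + 1 := ⟨k - 1, (Nat.succ_pred_eq_of_pos hk).symm⟩
    rw [Nat.add_sub_cancel]
    exact hbijOn j
  · -- τ (k+1) (tk k) = τ k (tk k)
    intro k hk
    obtain ⟨j, rfl⟩ : ∃ j, k = j + 1 := ⟨k - 1, (Nat.succ_pred_eq_of_pos hk).symm⟩
    have hb' : τ (j+1+1) (tk (j+1)) = tk (j+1+1) := (main (j+1)).2.2.1
    have ha' : tk (j+1+1) = τ (j+1) (tk (j+1)) := hsucc j
    exact hb'.trans ha'
  · -- FIFO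
    intro s t hs hst hex
    obtain ⟨k, hk⟩ := hex
    exact hSmono ⟨hs, k, lt_trans hst hk⟩ ⟨le_trans hs hst.le, k, hk⟩ hst
end

section
/- (Uniqueness of the dynamic network loading trajectory for a single arc.) Let h : ℝ → ℝ be continuous, let I ⊆ ℝ be an interval and t₀ ∈ I. Suppose (x₁,g₁,r₁) and (x₂,g₂,r₂) are two continuously differentiable functions I → ℝ³ that both satisfy the system x′(t) = h(t) − g(t), g′(t) = r(t), r′(t) = R(h(t), x(t), g(t), r(t)) for all t ∈ I, that both satisfy A + B·xᵢ(t) > 0 and 1 + B·(h(t) − gᵢ(t)) > 0 for all t ∈ I (i = 1,2), and that agree at t₀: (x₁,g₁,r₁)(t₀) = (x₂,g₂,r₂)(t₀). Then (x₁,g₁,r₁)(t) = (x₂,g₂,r₂)(t) for all t ∈ I. -/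
open Set Metric Filter Topology

noncomputable def Vfield (A B : ℝ) : ℝ × ℝ × ℝ × ℝ → ℝ × ℝ × ℝ := fun q =>
  (q.1 - q.2.2.1, q.2.2.2,
    2 * q.1 / ((A + B * q.2.1) ^ 2 * (1 + B * (q.1 - q.2.2.1)))
      - 2 * (q.2.2.1 + q.2.2.2 * (A + B * q.2.1)) / (A + B * q.2.1) ^ 2)

lemma contDiffAt_Vfield (A B : ℝ) (q₀ : ℝ × ℝ × ℝ × ℝ)
    (h1 : A + B * q₀.2.1 ≠ 0) (h2 : 1 + B * (q₀.1 - q₀.2.2.1) ≠ 0) :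
    ContDiffAt ℝ 1 (Vfield A B) q₀ := by
  have c1 : ContDiff ℝ 1 (fun q : ℝ × ℝ × ℝ × ℝ => q.1) := contDiff_fst
  have c2 : ContDiff ℝ 1 (fun q : ℝ × ℝ × ℝ × ℝ => q.2.1) := contDiff_fst.comp contDiff_snd
  have c3 : ContDiff ℝ 1 (fun q : ℝ × ℝ × ℝ × ℝ => q.2.2.1) :=
    contDiff_fst.comp (contDiff_snd.comp contDiff_snd)
  have c4 : ContDiff ℝ 1 (fun q : ℝ × ℝ × ℝ × ℝ => q.2.2.2) :=
    contDiff_snd.comp (contDiff_snd.comp contDiff_snd)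
  have cden : ContDiff ℝ 1 (fun q : ℝ × ℝ × ℝ × ℝ => (A + B * q.2.1) ^ 2) :=
    (contDiff_const.add (contDiff_const.mul c2)).pow 2
  have cden2 : ContDiff ℝ 1 (fun q : ℝ × ℝ × ℝ × ℝ => 1 + B * (q.1 - q.2.2.1)) :=
    contDiff_const.add (contDiff_const.mul (c1.sub c3))
  have d1 : ContDiffAt ℝ 1 (fun q : ℝ × ℝ × ℝ × ℝ =>
      2 * q.1 / ((A + B * q.2.1) ^ 2 * (1 + B * (q.1 - q.2.2.1)))) q₀ :=
    (contDiff_const.mul c1).contDiffAt.div ((cden.mul cden2).contDiffAt)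
      (mul_ne_zero (pow_ne_zero _ h1) h2)
  have d2 : ContDiffAt ℝ 1 (fun q : ℝ × ℝ × ℝ × ℝ =>
      2 * (q.2.2.1 + q.2.2.2 * (A + B * q.2.1)) / (A + B * q.2.1) ^ 2) q₀ :=
    (contDiff_const.mul (c3.add (c4.mul (contDiff_const.add (contDiff_const.mul c2))))).contDiffAt.div
      cden.contDiffAt (pow_ne_zero _ h1)
  exact ((c1.sub c3).contDiffAt).prodMk (c4.contDiffAt.prodMk (d1.sub d2))

lemma propagate (I : Set ℝ) (hI : I.OrdConnected) (t₀ : ℝ) (ht₀ : t₀ ∈ I)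
    (S : Set ℝ) (hS₀ : t₀ ∈ S)
    (hopen : ∀ t ∈ I, t ∈ S → ∃ δ > 0, ∀ u ∈ I, |u - t| ≤ δ → u ∈ S)
    (hclosedR : ∀ a b, a ∈ I → b ∈ I → a < b → Ico a b ⊆ S → b ∈ S)
    (hclosedL : ∀ a b, a ∈ I → b ∈ I → a < b → Ioc a b ⊆ S → a ∈ S) :
    ∀ t ∈ I, t ∈ S := by
  intro t ht
  rcases le_total t₀ t with hle | hle
  · set T : Set ℝ := {u | u ∈ Icc t₀ t ∧ Icc t₀ u ⊆ S} with hT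
    have hT₀ : t₀ ∈ T := ⟨⟨le_refl _, hle⟩, by simp [Icc_self, singleton_subset_iff, hS₀]⟩
    have hbdd : BddAbove T := ⟨t, fun u hu => hu.1.2⟩
    set c := sSup T with hc
    have hcmem : c ∈ Icc t₀ t := ⟨le_csSup hbdd hT₀, csSup_le ⟨t₀, hT₀⟩ (fun u hu => hu.1.2)⟩
    have hcI : c ∈ I := hI.out ht₀ ht hcmem
    have hIco : Ico t₀ c ⊆ S := by
      intro w hw
      obtain ⟨u, huT, hwu⟩ := exists_lt_of_lt_csSup ⟨t₀, hT₀⟩ hw.2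
      exact huT.2 ⟨hw.1, le_of_lt hwu⟩
    have hcS : c ∈ S := by
      rcases eq_or_lt_of_le hcmem.1 with h | h
      · exact h ▸ hS₀
      · exact hclosedR t₀ c ht₀ hcI h hIco
    have hcT : c ∈ T := ⟨hcmem, fun w hw => by
      rcases eq_or_lt_of_le hw.2 with h | h
      · exact h ▸ hcS
      · exact hIco ⟨hw.1, h⟩⟩
    rcases eq_or_lt_of_le hcmem.2 with h | h
    · exact h ▸ hcS
    · exfalso
      obtain ⟨δ, hδ, hball⟩ := hopen c hcI hcS
      set u := min t (c + δ) with hu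
      have hcu : c < u := lt_min h (by linarith)
      have huIcc : u ∈ Icc t₀ t := ⟨le_trans hcmem.1 hcu.le, min_le_left _ _⟩
      have huT : u ∈ T := by
        refine ⟨huIcc, fun w hw => ?_⟩
        rcases le_or_gt w c with h' | h'
        · exact hcT.2 ⟨hw.1, h'⟩
        · refine hball w (hI.out ht₀ ht ⟨hw.1, le_trans hw.2 huIcc.2⟩) ?_
          rw [abs_le]
          constructor
          · linarith
          · have := le_trans hw.2 (min_le_right t (c + δ)); linarith
      exact absurd (le_csSup hbdd huT) (not_le.mpr hcu)
  · set T : Set ℝ := {u | u ∈ Icc t t₀ ∧ Icc u t₀ ⊆ S} with hT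
    have hT₀ : t₀ ∈ T := ⟨⟨hle, le_refl _⟩, by simp [Icc_self, singleton_subset_iff, hS₀]⟩
    have hbdd : BddBelow T := ⟨t, fun u hu => hu.1.1⟩
    set c := sInf T with hc
    have hcmem : c ∈ Icc t t₀ := ⟨le_csInf ⟨t₀, hT₀⟩ (fun u hu => hu.1.1), csInf_le hbdd hT₀⟩
    have hcI : c ∈ I := hI.out ht ht₀ hcmem
    have hIoc : Ioc c t₀ ⊆ S := by
      intro w hw
      obtain ⟨u, huT, hwu⟩ := exists_lt_of_csInf_lt ⟨t₀, hT₀⟩ hw.1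
      exact huT.2 ⟨le_of_lt hwu, hw.2⟩
    have hcS : c ∈ S := by
      rcases eq_or_lt_of_le hcmem.2 with h | h
      · exact h ▸ hS₀
      · exact hclosedL c t₀ hcI ht₀ h hIoc
    have hcT : c ∈ T := ⟨hcmem, fun w hw => by
      rcases eq_or_lt_of_le hw.1 with h | h
      · exact h ▸ hcS
      · exact hIoc ⟨h, hw.2⟩⟩
    rcases eq_or_lt_of_le hcmem.1 with h | h
    · exact h ▸ hcS
    · exfalso
      obtain ⟨δ, hδ, hball⟩ := hopen c hcI hcS
      set u := max t (c - δ) with hu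
      have hcu : u < c := max_lt h (by linarith)
      have huIcc : u ∈ Icc t t₀ := ⟨le_max_left _ _, le_trans hcu.le hcmem.2⟩
      have huT : u ∈ T := by
        refine ⟨huIcc, fun w hw => ?_⟩
        rcases le_or_gt c w with h' | h'
        · exact hcT.2 ⟨h', hw.2⟩
        · refine hball w (hI.out ht ht₀ ⟨le_trans huIcc.1 hw.1, hw.2⟩) ?_
          rw [abs_le]
          constructor
          · have := le_trans (le_max_right t (c - δ)) hw.1; linarith
          · linarith
      exact absurd (csInf_le hbdd huT) (not_le.mpr hcu)

/-- uniqueness of the dynamic network loading trajectory for a single arc: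
two C¹ solutions of the system `x' = h − g`, `g' = r`, `r' = R(h,x,g,r)` on an interval
`I` that keep `A + Bx > 0` and `1 + B(h − g) > 0` and agree at some `t₀ ∈ I` coincide
on all of `I`. -/
theorem dnl_trajectory_unique
    (A B : ℝ) (hA : 0 < A) (hB : 0 < B)
    (R : ℝ → ℝ → ℝ → ℝ → ℝ)
    (hR : ∀ h x g r, R h x g r =
      2 * h / ((A + B * x) ^ 2 * (1 + B * (h - g)))
        - 2 * (g + r * (A + B * x)) / (A + B * x) ^ 2)
    (h : ℝ → ℝ) (hh : Continuous h)
    (I : Set ℝ) (hI : I.OrdConnected) (t₀ : ℝ) (ht₀ : t₀ ∈ I)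
    (x₁ g₁ r₁ x₂ g₂ r₂ : ℝ → ℝ)
    (hx₁ : ∀ t ∈ I, HasDerivWithinAt x₁ (h t - g₁ t) I t)
    (hg₁ : ∀ t ∈ I, HasDerivWithinAt g₁ (r₁ t) I t)
    (hr₁ : ∀ t ∈ I, HasDerivWithinAt r₁ (R (h t) (x₁ t) (g₁ t) (r₁ t)) I t)
    (hx₂ : ∀ t ∈ I, HasDerivWithinAt x₂ (h t - g₂ t) I t)
    (hg₂ : ∀ t ∈ I, HasDerivWithinAt g₂ (r₂ t) I t)
    (hr₂ : ∀ t ∈ I, HasDerivWithinAt r₂ (R (h t) (x₂ t) (g₂ t) (r₂ t)) I t)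
    (hpos₁ : ∀ t ∈ I, 0 < A + B * x₁ t ∧ 0 < 1 + B * (h t - g₁ t))
    (hpos₂ : ∀ t ∈ I, 0 < A + B * x₂ t ∧ 0 < 1 + B * (h t - g₂ t))
    (hinit : x₁ t₀ = x₂ t₀ ∧ g₁ t₀ = g₂ t₀ ∧ r₁ t₀ = r₂ t₀) :
    ∀ t ∈ I, x₁ t = x₂ t ∧ g₁ t = g₂ t ∧ r₁ t = r₂ t := by
  classical
  set F₁ : ℝ → ℝ × ℝ × ℝ := fun u => (x₁ u, g₁ u, r₁ u) with hF₁
  set F₂ : ℝ → ℝ × ℝ × ℝ := fun u => (x₂ u, g₂ u, r₂ u) with hF₂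
  set S : Set ℝ := {u | x₁ u = x₂ u ∧ g₁ u = g₂ u ∧ r₁ u = r₂ u} with hSdef
  -- continuity of all six component functions on I
  have hcx₁ : ContinuousOn x₁ I := fun u hu => (hx₁ u hu).continuousWithinAt
  have hcg₁ : ContinuousOn g₁ I := fun u hu => (hg₁ u hu).continuousWithinAt
  have hcr₁ : ContinuousOn r₁ I := fun u hu => (hr₁ u hu).continuousWithinAt
  have hcx₂ : ContinuousOn x₂ I := fun u hu => (hx₂ u hu).continuousWithinAt
  have hcg₂ : ContinuousOn g₂ I := fun u hu => (hg₂ u hu).continuousWithinAt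
  have hcr₂ : ContinuousOn r₂ I := fun u hu => (hr₂ u hu).continuousWithinAt
  have hcF₁ : ContinuousOn F₁ I := hcx₁.prodMk (hcg₁.prodMk hcr₁)
  have hcF₂ : ContinuousOn F₂ I := hcx₂.prodMk (hcg₂.prodMk hcr₂)
  -- closedness
  have key : ∀ (f₁ f₂ : ℝ → ℝ) (J : Set ℝ) (b : ℝ), ContinuousWithinAt f₁ I b →
      ContinuousWithinAt f₂ I b → J ⊆ I → (𝓝[J] b).NeBot → (∀ w ∈ J, f₁ w = f₂ w) →
      f₁ b = f₂ b := by
    intro f₁ f₂ J b hc₁ hc₂ hJI hne heq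
    have h₁ : Tendsto f₁ (𝓝[J] b) (𝓝 (f₁ b)) := (hc₁.mono hJI).tendsto
    have h₂ : Tendsto f₂ (𝓝[J] b) (𝓝 (f₂ b)) := (hc₂.mono hJI).tendsto
    have heq' : f₁ =ᶠ[𝓝[J] b] f₂ := eventuallyEq_of_mem self_mem_nhdsWithin heq
    exact tendsto_nhds_unique h₁ (h₂.congr' heq'.symm)
  have hclosedR : ∀ a b, a ∈ I → b ∈ I → a < b → Ico a b ⊆ S → b ∈ S := by
    intro a b ha hb hab hsub
    have hJI : Ico a b ⊆ I := fun w hw => hI.out ha hb ⟨hw.1, hw.2.le⟩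
    have hne : (𝓝[Ico a b] b).NeBot := by
      rw [← mem_closure_iff_nhdsWithin_neBot, closure_Ico hab.ne]
      exact ⟨hab.le, le_refl b⟩
    exact ⟨key x₁ x₂ _ b (hcx₁ b hb) (hcx₂ b hb) hJI hne (fun w hw => (hsub hw).1),
      key g₁ g₂ _ b (hcg₁ b hb) (hcg₂ b hb) hJI hne (fun w hw => (hsub hw).2.1),
      key r₁ r₂ _ b (hcr₁ b hb) (hcr₂ b hb) hJI hne (fun w hw => (hsub hw).2.2)⟩
  have hclosedL : ∀ a b, a ∈ I → b ∈ I → a < b → Ioc a b ⊆ S → a ∈ S := by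
    intro a b ha hb hab hsub
    have hJI : Ioc a b ⊆ I := fun w hw => hI.out ha hb ⟨hw.1.le, hw.2⟩
    have hne : (𝓝[Ioc a b] a).NeBot := by
      rw [← mem_closure_iff_nhdsWithin_neBot, closure_Ioc hab.ne]
      exact ⟨le_refl a, hab.le⟩
    exact ⟨key x₁ x₂ _ a (hcx₁ a ha) (hcx₂ a ha) hJI hne (fun w hw => (hsub hw).1),
      key g₁ g₂ _ a (hcg₁ a ha) (hcg₂ a ha) hJI hne (fun w hw => (hsub hw).2.1),
      key r₁ r₂ _ a (hcr₁ a ha) (hcr₂ a ha) hJI hne (fun w hw => (hsub hw).2.2)⟩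
  -- openness
  have hopen : ∀ t₁ ∈ I, t₁ ∈ S → ∃ δ > 0, ∀ u ∈ I, |u - t₁| ≤ δ → u ∈ S := by
    intro t₁ ht₁ hS
    obtain ⟨heqx, heqg, heqr⟩ := hS
    set q₀ : ℝ × ℝ × ℝ × ℝ := (h t₁, x₁ t₁, g₁ t₁, r₁ t₁) with hq₀
    have hpos := hpos₁ t₁ ht₁
    have hcd : ContDiffAt ℝ 1 (Vfield A B) q₀ :=
      contDiffAt_Vfield A B q₀ (ne_of_gt hpos.1) (ne_of_gt hpos.2)
    obtain ⟨K, s, hs, hlip⟩ := hcd.exists_lipschitzOnWith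
    obtain ⟨ρ, hρ, hballs⟩ := nhds_basis_closedBall.mem_iff.mp hs
    -- Lipschitz on slices
    have hlip' : ∀ w : ℝ, LipschitzOnWith K (fun p => Vfield A B (h w, p))
        {p : ℝ × ℝ × ℝ | (h w, p) ∈ closedBall q₀ ρ} := by
      intro w p hp q hq
      calc edist (Vfield A B (h w, p)) (Vfield A B (h w, q))
          ≤ K * edist ((h w, p) : ℝ × ℝ × ℝ × ℝ) (h w, q) := hlip (hballs hp) (hballs hq)
        _ = K * edist p q := by rw [Prod.edist_eq, edist_self, max_eq_right zero_le]
    -- continuity gives neighborhoods staying in the ball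
    have hG₁ : Tendsto (fun u => ((h u, F₁ u) : ℝ × ℝ × ℝ × ℝ)) (𝓝[I] t₁) (𝓝 q₀) :=
      (hh.continuousWithinAt.prodMk (hcF₁ t₁ ht₁)).tendsto
    have hG₂ : Tendsto (fun u => ((h u, F₂ u) : ℝ × ℝ × ℝ × ℝ)) (𝓝[I] t₁) (𝓝 q₀) := by
      have := (hh.continuousWithinAt.prodMk (hcF₂ t₁ ht₁)).tendsto
      have hv : ((h t₁, F₂ t₁) : ℝ × ℝ × ℝ × ℝ) = q₀ := by
        simp [hF₂, hq₀, heqx, heqg, heqr]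
      rwa [hv] at this
    have hmem₁ : (fun u => ((h u, F₁ u) : ℝ × ℝ × ℝ × ℝ)) ⁻¹' closedBall q₀ ρ ∈ 𝓝[I] t₁ :=
      hG₁ (closedBall_mem_nhds _ hρ)
    have hmem₂ : (fun u => ((h u, F₂ u) : ℝ × ℝ × ℝ × ℝ)) ⁻¹' closedBall q₀ ρ ∈ 𝓝[I] t₁ :=
      hG₂ (closedBall_mem_nhds _ hρ)
    obtain ⟨ε₁, hε₁, hsub₁⟩ := mem_nhdsWithin_iff.mp hmem₁
    obtain ⟨ε₂, hε₂, hsub₂⟩ := mem_nhdsWithin_iff.mp hmem₂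
    set δ := min ε₁ ε₂ / 2 with hδdef
    have hδ : 0 < δ := by positivity
    have hδ₁ : δ < ε₁ := by have := min_le_left ε₁ ε₂; simp only [hδdef]; linarith
    have hδ₂ : δ < ε₂ := by have := min_le_right ε₁ ε₂; simp only [hδdef]; linarith
    refine ⟨δ, hδ, ?_⟩
    intro u huI hud
    have hFeq : F₁ t₁ = F₂ t₁ := by simp [hF₁, hF₂, heqx, heqg, heqr]
    -- set-valued constraint
    set sv : ℝ → Set (ℝ × ℝ × ℝ) := fun w => {p | (h w, p) ∈ closedBall q₀ ρ} with hsv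
    have hmemball : ∀ w ∈ I, |w - t₁| < ε₁ → F₁ w ∈ sv w := by
      intro w hwI hw
      exact hsub₁ ⟨by simpa [Real.dist_eq] using hw, hwI⟩
    have hmemball₂ : ∀ w ∈ I, |w - t₁| < ε₂ → F₂ w ∈ sv w := by
      intro w hwI hw
      exact hsub₂ ⟨by simpa [Real.dist_eq] using hw, hwI⟩
    have hVeq₁ : ∀ w, Vfield A B (h w, F₁ w) =
        (h w - g₁ w, r₁ w, R (h w) (x₁ w) (g₁ w) (r₁ w)) := by
      intro w; simp [Vfield, hF₁, hR]
    have hVeq₂ : ∀ w, Vfield A B (h w, F₂ w) =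
        (h w - g₂ w, r₂ w, R (h w) (x₂ w) (g₂ w) (r₂ w)) := by
      intro w; simp [Vfield, hF₂, hR]
    rcases lt_trichotomy t₁ u with hlt | heq | hlt
    · -- rightward local uniqueness on [t₁, u]
      have hIccI : Icc t₁ u ⊆ I := fun w hw => hI.out ht₁ huI hw
      have habs : ∀ w ∈ Icc t₁ u, |w - t₁| ≤ δ := by
        intro w hw
        rw [abs_le]
        have : |u - t₁| ≤ δ := hud
        rw [abs_le] at this
        constructor <;> [linarith [hw.1]; linarith [hw.2, this.2]]
      have hf' : ∀ w ∈ Ico t₁ u, HasDerivWithinAt F₁ (Vfield A B (h w, F₁ w)) (Ici w) w := by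
        intro w hw
        have hwI : w ∈ I := hIccI ⟨hw.1, hw.2.le⟩
        have hD : HasDerivWithinAt F₁
            ((h w - g₁ w, r₁ w, R (h w) (x₁ w) (g₁ w) (r₁ w)) : ℝ × ℝ × ℝ) I w :=
          (hx₁ w hwI).prodMk ((hg₁ w hwI).prodMk (hr₁ w hwI))
        rw [hVeq₁ w]
        exact hD.mono_of_mem_nhdsWithin (mem_of_superset (Icc_mem_nhdsGE_of_mem hw) hIccI)
      have hg' : ∀ w ∈ Ico t₁ u, HasDerivWithinAt F₂ (Vfield A B (h w, F₂ w)) (Ici w) w := by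
        intro w hw
        have hwI : w ∈ I := hIccI ⟨hw.1, hw.2.le⟩
        have hD : HasDerivWithinAt F₂
            ((h w - g₂ w, r₂ w, R (h w) (x₂ w) (g₂ w) (r₂ w)) : ℝ × ℝ × ℝ) I w :=
          (hx₂ w hwI).prodMk ((hg₂ w hwI).prodMk (hr₂ w hwI))
        rw [hVeq₂ w]
        exact hD.mono_of_mem_nhdsWithin (mem_of_superset (Icc_mem_nhdsGE_of_mem hw) hIccI)
      have heqn := ODE_solution_unique_of_mem_Icc_right (v := fun w p => Vfield A B (h w, p))
        (s := sv) (K := K) (f := F₁) (g := F₂) (a := t₁) (b := u)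
        (fun w _ => hlip' w) (hcF₁.mono hIccI) hf'
        (fun w hw => hmemball w (hIccI ⟨hw.1, hw.2.le⟩)
          (lt_of_le_of_lt (habs w ⟨hw.1, hw.2.le⟩) hδ₁))
        (hcF₂.mono hIccI) hg'
        (fun w hw => hmemball₂ w (hIccI ⟨hw.1, hw.2.le⟩)
          (lt_of_le_of_lt (habs w ⟨hw.1, hw.2.le⟩) hδ₂))
        hFeq
      have := heqn ⟨hlt.le, le_refl u⟩
      simpa [hSdef, hF₁, hF₂, Prod.ext_iff] using this
    · exact heq ▸ ⟨heqx, heqg, heqr⟩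
    · -- leftward local uniqueness on [u, t₁]
      have hIccI : Icc u t₁ ⊆ I := fun w hw => hI.out huI ht₁ hw
      have habs : ∀ w ∈ Icc u t₁, |w - t₁| ≤ δ := by
        intro w hw
        rw [abs_le]
        have : |u - t₁| ≤ δ := hud
        rw [abs_le] at this
        constructor <;> [linarith [hw.1, this.1]; linarith [hw.2]]
      have hf' : ∀ w ∈ Ioc u t₁, HasDerivWithinAt F₁ (Vfield A B (h w, F₁ w)) (Iic w) w := by
        intro w hw
        have hwI : w ∈ I := hIccI ⟨hw.1.le, hw.2⟩
        have hD : HasDerivWithinAt F₁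
            ((h w - g₁ w, r₁ w, R (h w) (x₁ w) (g₁ w) (r₁ w)) : ℝ × ℝ × ℝ) I w :=
          (hx₁ w hwI).prodMk ((hg₁ w hwI).prodMk (hr₁ w hwI))
        rw [hVeq₁ w]
        exact hD.mono_of_mem_nhdsWithin (mem_of_superset (Icc_mem_nhdsLE_of_mem hw) hIccI)
      have hg' : ∀ w ∈ Ioc u t₁, HasDerivWithinAt F₂ (Vfield A B (h w, F₂ w)) (Iic w) w := by
        intro w hw
        have hwI : w ∈ I := hIccI ⟨hw.1.le, hw.2⟩
        have hD : HasDerivWithinAt F₂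
            ((h w - g₂ w, r₂ w, R (h w) (x₂ w) (g₂ w) (r₂ w)) : ℝ × ℝ × ℝ) I w :=
          (hx₂ w hwI).prodMk ((hg₂ w hwI).prodMk (hr₂ w hwI))
        rw [hVeq₂ w]
        exact hD.mono_of_mem_nhdsWithin (mem_of_superset (Icc_mem_nhdsLE_of_mem hw) hIccI)
      have heqn := ODE_solution_unique_of_mem_Icc_left (v := fun w p => Vfield A B (h w, p))
        (s := sv) (K := K) (f := F₁) (g := F₂) (a := u) (b := t₁)
        (fun w _ => hlip' w) (hcF₁.mono hIccI) hf'
        (fun w hw => hmemball w (hIccI ⟨hw.1.le, hw.2⟩)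
          (lt_of_le_of_lt (habs w ⟨hw.1.le, hw.2⟩) hδ₁))
        (hcF₂.mono hIccI) hg'
        (fun w hw => hmemball₂ w (hIccI ⟨hw.1.le, hw.2⟩)
          (lt_of_le_of_lt (habs w ⟨hw.1.le, hw.2⟩) hδ₂))
        hFeq
      have := heqn ⟨le_refl u, hlt.le⟩
      simpa [hSdef, hF₁, hF₂, Prod.ext_iff] using this
  exact propagate I hI t₀ ht₀ S hinit hopen hclosedR hclosedL
end
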